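/- arXiv:1504.07234 — 4 statements merged into one kernel-verified Lean document; each statement's English description precedes it below -/
import Mathlib

section
/- Let K be a real m×s matrix with m < s, let g ∈ ℝ^m, let μ > 0, and let 0 < λ < 1/‖KᵀK‖ (spectral norm). Define sequences by z⁰ = x⁰ = 0 and, for n ≥ 0, z^{n+1} = z^n + Kᵀ(g − K x^n), x^{n+1} = λ·S_μ(z^{n+1}). Then the sequence (x^n) converges to the unique solution of the problem: minimize μ‖x‖₁ + (1/(2λ))‖x‖² over the set of minimizers of ‖Kx − g‖² in ℝ^s. -/
open Matrix Filter

/-- Soft-thresholding operator acting componentwise: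
`S_μ(u)_i = sgn(u_i) · max(|u_i| − μ, 0)`. -/
noncomputable def soft {s : ℕ} (μ : ℝ) (u : EuclideanSpace ℝ (Fin s)) : EuclideanSpace ℝ (Fin s) :=
  WithLp.toLp 2 (fun i => Real.sign (u i) * max (|u i| - μ) 0)

/-- Matrix-vector multiplication as a map between Euclidean spaces. -/
noncomputable def mulVecE {m n : ℕ} (A : Matrix (Fin m) (Fin n) ℝ)
    (v : EuclideanSpace ℝ (Fin n)) : EuclideanSpace ℝ (Fin m) :=
  WithLp.toLp 2 (A.mulVec v)

/-- The spectral norm of a real matrix: the operator norm induced by Euclidean vector norms. -/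
noncomputable def specNorm {m n : ℕ} (A : Matrix (Fin m) (Fin n) ℝ) : ℝ :=
  ‖(Matrix.toEuclideanLin A).toContinuousLinearMap‖

/-- The ℓ¹-norm of a vector. -/
noncomputable def l1norm {s : ℕ} (u : EuclideanSpace ℝ (Fin s)) : ℝ := ∑ i, |u i|

/-! ### One-dimensional soft-thresholding lemmas -/

noncomputable def s1 (μ t : ℝ) : ℝ := max (t - μ) 0 + min (t + μ) 0

lemma s1_eq (μ : ℝ) (hμ : 0 ≤ μ) (t : ℝ) :
    Real.sign t * max (|t| - μ) 0 = s1 μ t := by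
  rcases lt_trichotomy t 0 with h | h | h
  · rw [Real.sign_of_neg h, abs_of_neg h, s1]
    rcases le_total (t + μ) 0 with h2 | h2
    · rw [min_eq_left h2, max_eq_left (by linarith), max_eq_right (by linarith)]; ring
    · rw [min_eq_right h2, max_eq_right (by linarith), max_eq_right (by linarith)]; ring
  · simp [h, s1, hμ, min_eq_right, max_eq_right, neg_nonpos.mpr hμ]
  · rw [Real.sign_of_pos h, abs_of_pos h, s1, min_eq_right (by linarith)]; ring

lemma s1_cases (μ t : ℝ) (hμ : 0 ≤ μ) :
    (μ < t ∧ s1 μ t = t - μ) ∨ (t < -μ ∧ s1 μ t = t + μ) ∨ (-μ ≤ t ∧ t ≤ μ ∧ s1 μ t = 0) := by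
  rcases lt_trichotomy t μ with h | h | h
  · rcases lt_trichotomy t (-μ) with h2 | h2 | h2
    · right; left; refine ⟨h2, ?_⟩
      rw [s1, max_eq_right (by linarith), min_eq_left (by linarith)]; ring
    · right; right; refine ⟨le_of_eq h2.symm, le_of_lt h, ?_⟩
      rw [s1, max_eq_right (by linarith), min_eq_right (by linarith)]; ring
    · right; right; refine ⟨le_of_lt h2, le_of_lt h, ?_⟩
      rw [s1, max_eq_right (by linarith), min_eq_right (by linarith)]; ring
  · right; right; refine ⟨by linarith, le_of_eq h, ?_⟩
    rw [s1, max_eq_right (by linarith), min_eq_right (by linarith)]; ring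
  · left; refine ⟨h, ?_⟩
    rw [s1, max_eq_left (by linarith), min_eq_right (by linarith)]; ring

lemma s1_zero (μ : ℝ) (hμ : 0 ≤ μ) : s1 μ 0 = 0 := by
  rw [s1, max_eq_right (by linarith), min_eq_right (by linarith)]; ring

lemma s1_firm (μ a b : ℝ) (hμ : 0 ≤ μ) :
    (s1 μ a - s1 μ b) ^ 2 ≤ (s1 μ a - s1 μ b) * (a - b) := by
  rcases s1_cases μ a hμ with ⟨h1, e1⟩ | ⟨h1, e1⟩ | ⟨h1, h1', e1⟩ <;>
    rcases s1_cases μ b hμ with ⟨h2, e2⟩ | ⟨h2, e2⟩ | ⟨h2, h2', e2⟩ <;>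
    rw [e1, e2] <;> nlinarith

lemma s1_lipsq (μ a b : ℝ) (hμ : 0 ≤ μ) : (s1 μ a - s1 μ b) ^ 2 ≤ (a - b) ^ 2 := by
  have h := s1_firm μ a b hμ
  nlinarith [sq_nonneg (s1 μ a - s1 μ b - (a - b))]

lemma s1_descent (μ a b : ℝ) (hμ : 0 ≤ μ) :
    s1 μ b ^ 2 ≤ s1 μ a ^ 2 + 2 * s1 μ a * (b - a) + (b - a) ^ 2 := by
  rcases s1_cases μ a hμ with ⟨h1, e1⟩ | ⟨h1, e1⟩ | ⟨h1, h1', e1⟩ <;>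
    rcases s1_cases μ b hμ with ⟨h2, e2⟩ | ⟨h2, e2⟩ | ⟨h2, h2', e2⟩ <;>
    rw [e1, e2] <;> nlinarith

lemma s1_growth (μ z : ℝ) (hμ : 0 ≤ μ) : z ^ 2 - 2 * μ * |z| ≤ s1 μ z ^ 2 := by
  rcases s1_cases μ z hμ with ⟨h1, e1⟩ | ⟨h1, e1⟩ | ⟨h1, h1', e1⟩ <;> rw [e1] <;>
    rcases abs_cases z with ⟨ha, _⟩ | ⟨ha, _⟩ <;> rw [ha] <;> nlinarith

lemma s1_subgrad (μ lam z y : ℝ) (hμ : 0 ≤ μ) (hlam : 0 < lam) :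
    2 * lam * μ * |lam * s1 μ z| + (lam * s1 μ z) ^ 2 + 2 * lam * z * (y - lam * s1 μ z) ≤
      2 * lam * μ * |y| + y ^ 2 := by
  have key : 2 * lam * μ * |lam * s1 μ z| + (lam * s1 μ z) ^ 2 + 2 * lam * z * (y - lam * s1 μ z) ≤
      2 * lam * μ * y + y ^ 2 ∨
      2 * lam * μ * |lam * s1 μ z| + (lam * s1 μ z) ^ 2 + 2 * lam * z * (y - lam * s1 μ z) ≤
      2 * lam * μ * (-y) + y ^ 2 := by
    rcases s1_cases μ z hμ with ⟨h1, e1⟩ | ⟨h1, e1⟩ | ⟨h1, h1', e1⟩ <;> rw [e1]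
    · left; rw [abs_of_nonneg (by nlinarith)]; nlinarith [sq_nonneg (y - lam * (z - μ))]
    · right; rw [abs_of_nonpos (by nlinarith)]; nlinarith [sq_nonneg (y - lam * (z + μ))]
    · rcases le_total 0 y with hy | hy
      · left; simp only [mul_zero, abs_zero, sub_zero]
        nlinarith [mul_nonneg (mul_nonneg hlam.le (sub_nonneg.mpr h1')) hy, sq_nonneg y]
      · right; simp only [mul_zero, abs_zero, sub_zero]
        nlinarith [mul_nonneg (mul_nonneg hlam.le (by linarith : (0:ℝ) ≤ μ + z)) (neg_nonneg.mpr hy), sq_nonneg y]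
  rcases key with h | h
  · exact h.trans (by nlinarith [mul_nonneg (mul_nonneg (by linarith : (0:ℝ) ≤ 2*lam) hμ) (sub_nonneg.mpr (le_abs_self y))])
  · exact h.trans (by nlinarith [mul_nonneg (mul_nonneg (by linarith : (0:ℝ) ≤ 2*lam) hμ) (sub_nonneg.mpr (neg_abs_le y))])

/-! ### Euclidean space glue -/


lemma soft_coord {s : ℕ} {μ : ℝ} (hμ : 0 ≤ μ) (u : EuclideanSpace ℝ (Fin s)) (i : Fin s) :
    soft μ u i = s1 μ (u i) := by unfold soft; exact s1_eq μ hμ (u i)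

lemma normsq {s : ℕ} (a : EuclideanSpace ℝ (Fin s)) : ‖a‖ ^ 2 = ∑ i, (a i) ^ 2 := by
  rw [EuclideanSpace.norm_eq, Real.sq_sqrt (Finset.sum_nonneg fun i _ => sq_nonneg _)]
  simp [Real.norm_eq_abs, sq_abs]

lemma innersum {s : ℕ} (a b : EuclideanSpace ℝ (Fin s)) : (inner ℝ a b : ℝ) = ∑ i, a i * b i := by
  simp [PiLp.inner_apply, RCLike.inner_apply, mul_comm]

lemma adjE {m n : ℕ} (A : Matrix (Fin m) (Fin n) ℝ) (u : EuclideanSpace ℝ (Fin m))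
    (v : EuclideanSpace ℝ (Fin n)) :
    (inner ℝ (mulVecE Aᵀ u) v : ℝ) = inner ℝ u (mulVecE A v) := by
  simp [PiLp.inner_apply, RCLike.inner_apply, mulVecE, Matrix.mulVec, dotProduct,
    Finset.mul_sum, Finset.sum_mul]
  rw [Finset.sum_comm]
  congr 1; ext j; congr 1; ext i; ring

lemma mulVecE_add {m n : ℕ} (A : Matrix (Fin m) (Fin n) ℝ) (a b : EuclideanSpace ℝ (Fin n)) :
    mulVecE A (a + b) = mulVecE A a + mulVecE A b := by simp [mulVecE, Matrix.mulVec_add]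

lemma mulVecE_sub {m n : ℕ} (A : Matrix (Fin m) (Fin n) ℝ) (a b : EuclideanSpace ℝ (Fin n)) :
    mulVecE A (a - b) = mulVecE A a - mulVecE A b := by simp [mulVecE, Matrix.mulVec_sub]

lemma mulVecE_smul {m n : ℕ} (A : Matrix (Fin m) (Fin n) ℝ) (t : ℝ) (a : EuclideanSpace ℝ (Fin n)) :
    mulVecE A (t • a) = t • mulVecE A a := by simp [mulVecE, Matrix.mulVec_smul]

lemma mulVecE_zero {m n : ℕ} (A : Matrix (Fin m) (Fin n) ℝ) :
    mulVecE A (0 : EuclideanSpace ℝ (Fin n)) = 0 := by simp [mulVecE]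

lemma mulVecE_mul {m n : ℕ} (A : Matrix (Fin m) (Fin n) ℝ) (B : Matrix (Fin n) (Fin m) ℝ)
    (v : EuclideanSpace ℝ (Fin m)) :
    mulVecE (A * B) v = mulVecE A (mulVecE B v) := by simp [mulVecE, Matrix.mulVec_mulVec]

lemma mulVecE_clm {m n : ℕ} (A : Matrix (Fin m) (Fin n) ℝ) (v : EuclideanSpace ℝ (Fin n)) :
    (Matrix.toEuclideanLin A).toContinuousLinearMap v = mulVecE A v := rfl

lemma specNorm_bound {m n : ℕ} (A : Matrix (Fin m) (Fin n) ℝ) (v : EuclideanSpace ℝ (Fin n)) :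
    ‖mulVecE A v‖ ≤ specNorm A * ‖v‖ := by
  rw [← mulVecE_clm]; exact (Matrix.toEuclideanLin A).toContinuousLinearMap.le_opNorm v

lemma norm_mulVec_sq_le {m n : ℕ} (K : Matrix (Fin m) (Fin n) ℝ) (v : EuclideanSpace ℝ (Fin n)) :
    ‖mulVecE K v‖ ^ 2 ≤ specNorm (Kᵀ * K) * ‖v‖ ^ 2 := by
  have h1 : ‖mulVecE K v‖ ^ 2 = (inner ℝ (mulVecE (Kᵀ * K) v) v : ℝ) := by
    rw [mulVecE_mul, adjE, real_inner_self_eq_norm_sq]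
  rw [h1]
  calc (inner ℝ (mulVecE (Kᵀ * K) v) v : ℝ) ≤ ‖mulVecE (Kᵀ * K) v‖ * ‖v‖ := real_inner_le_norm _ _
    _ ≤ specNorm (Kᵀ * K) * ‖v‖ * ‖v‖ :=
        mul_le_mul_of_nonneg_right (specNorm_bound _ _) (norm_nonneg _)
    _ = specNorm (Kᵀ * K) * ‖v‖ ^ 2 := by ring

lemma le_of_sq_le_sq' (a b : ℝ) (hb : 0 ≤ b) (h : a ^ 2 ≤ b ^ 2) : a ≤ b := by
  by_contra h'
  push_neg at h'
  nlinarith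

lemma soft_norm_le {s : ℕ} {μ : ℝ} (hμ : 0 ≤ μ) (u v : EuclideanSpace ℝ (Fin s)) :
    ‖soft μ u - soft μ v‖ ≤ ‖u - v‖ := by
  have h2 : ‖soft μ u - soft μ v‖ ^ 2 ≤ ‖u - v‖ ^ 2 := by
    rw [normsq, normsq]
    apply Finset.sum_le_sum
    intro i _
    have h3 : (soft μ u - soft μ v) i = s1 μ (u i) - s1 μ (v i) := by
      show soft μ u i - soft μ v i = _
      rw [soft_coord hμ, soft_coord hμ]
    have h4 : (u - v) i = u i - v i := rfl
    rw [h3, h4]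
    exact s1_lipsq μ (u i) (v i) hμ
  exact le_of_sq_le_sq' _ _ (norm_nonneg _) h2

lemma soft_lip {s : ℕ} {μ : ℝ} (hμ : 0 ≤ μ) :
    LipschitzWith 1 (soft μ : EuclideanSpace ℝ (Fin s) → EuclideanSpace ℝ (Fin s)) :=
  LipschitzWith.of_dist_le_mul fun u v => by
    rw [dist_eq_norm, dist_eq_norm]; simpa using soft_norm_le hμ u v

set_option maxHeartbeats 1000000 in
lemma exists_dual_max {m s : ℕ} (K : Matrix (Fin m) (Fin s) ℝ)
    (μ lam : ℝ) (hμ0 : 0 ≤ μ) (hlam0 : 0 < lam)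
    (ghat : EuclideanSpace ℝ (Fin m))
    (hghat_mem : ghat ∈ LinearMap.range (Matrix.toEuclideanLin K)) :
    ∃ qstar : EuclideanSpace ℝ (Fin m),
      ghat = lam • mulVecE K (soft μ (mulVecE Kᵀ qstar)) := by
  set U : Submodule ℝ (EuclideanSpace ℝ (Fin m)) := LinearMap.range (Matrix.toEuclideanLin K)
    with hU_def
  have hU_mem : ∀ v : EuclideanSpace ℝ (Fin s), mulVecE K v ∈ U := fun v => ⟨v, rfl⟩
  have hsoft : ∀ (u : EuclideanSpace ℝ (Fin s)) i, soft μ u i = s1 μ (u i) :=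
    fun u i => soft_coord hμ0 u i
  have hsoft0 : soft μ (0 : EuclideanSpace ℝ (Fin s)) = 0 := by
    ext i; rw [hsoft]; exact s1_zero μ hμ0
  -- injectivity of Kᵀ on U
  have hinjU : ∀ w ∈ U, mulVecE Kᵀ w = 0 → w = 0 := by
    intro w hw h0
    obtain ⟨v, hv⟩ := hw
    have h1 : (inner ℝ w w : ℝ) = 0 := by
      have h3 := adjE K w v
      rw [h0, inner_zero_left] at h3
      have h4 : mulVecE K v = w := hv
      nth_rewrite 2 [← h4]
      exact h3.symm
    exact inner_self_eq_zero.mp h1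
  -- antilipschitz bound for Kᵀ on U
  set L : ↥U →ₗ[ℝ] EuclideanSpace ℝ (Fin s) := (Matrix.toEuclideanLin Kᵀ).comp U.subtype
    with hL_def
  have hLker : LinearMap.ker L = ⊥ := by
    rw [LinearMap.ker_eq_bot']
    intro p hp
    have h0 : mulVecE Kᵀ (p : EuclideanSpace ℝ (Fin m)) = 0 := hp
    exact Subtype.ext (hinjU p p.2 h0)
  obtain ⟨κ, hκ0, hκ⟩ := L.exists_antilipschitzWith hLker
  have hκpos : (0:ℝ) < κ := by exact_mod_cast hκ0
  have hκb : ∀ w ∈ U, ‖w‖ ≤ (κ:ℝ) * ‖mulVecE Kᵀ w‖ := by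
    intro w hw
    have h := hκ.le_mul_dist ⟨w, hw⟩ 0
    rw [map_zero, dist_zero_right, dist_zero_right] at h
    have e1 : ‖(⟨w, hw⟩ : U)‖ = ‖w‖ := rfl
    have e2 : L ⟨w, hw⟩ = mulVecE Kᵀ w := rfl
    rw [e1, e2] at h
    exact h
  set Ct := specNorm Kᵀ with hCt_def
  have hCt0 : (0:ℝ) ≤ Ct := norm_nonneg _
  set f : EuclideanSpace ℝ (Fin m) → ℝ :=
    fun p => (inner ℝ p ghat : ℝ) - (lam/2) * ‖soft μ (mulVecE Kᵀ p)‖^2 with hf_def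
  have habs : ∀ (u : EuclideanSpace ℝ (Fin s)) i, |u i| ≤ ‖u‖ := by
    intro u i
    apply le_of_sq_le_sq' _ _ (norm_nonneg u)
    rw [normsq, sq_abs]
    exact Finset.single_le_sum (f := fun j => (u j)^2) (fun j _ => sq_nonneg _)
      (Finset.mem_univ i)
  have hl1b : ∀ (u : EuclideanSpace ℝ (Fin s)), ∑ i, |u i| ≤ (s:ℝ) * ‖u‖ := by
    intro u
    calc ∑ i, |u i| ≤ ∑ _i : Fin s, ‖u‖ := Finset.sum_le_sum (fun i _ => habs u i)
      _ = (s:ℝ) * ‖u‖ := by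
          rw [Finset.sum_const, Finset.card_univ, Fintype.card_fin, nsmul_eq_mul]
  have hgrow : ∀ (u : EuclideanSpace ℝ (Fin s)),
      ‖u‖^2 - 2*μ*((s:ℝ)*‖u‖) ≤ ‖soft μ u‖^2 := by
    intro u
    have h1 : ∑ i, ((u i)^2 - 2*μ*|u i|) ≤ ∑ i, (s1 μ (u i))^2 :=
      Finset.sum_le_sum (fun i _ => s1_growth μ (u i) hμ0)
    have h2 : ∑ i, ((u i)^2 - 2*μ*|u i|) = ‖u‖^2 - 2*μ*(∑ i, |u i|) := by
      rw [normsq, Finset.sum_sub_distrib, Finset.mul_sum]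
    have h3 : ‖soft μ u‖^2 = ∑ i, (s1 μ (u i))^2 := by
      rw [normsq]; exact Finset.sum_congr rfl (fun i _ => by rw [hsoft])
    rw [h2] at h1
    rw [h3]
    have h5 : 2*μ*(∑ i, |u i|) ≤ 2*μ*((s:ℝ)*‖u‖) :=
      mul_le_mul_of_nonneg_left (hl1b u) (by linarith)
    linarith
  set A := lam/(2*(κ:ℝ)^2) with hA_def
  set B := ‖ghat‖ + lam*μ*(s:ℝ)*Ct with hB_def
  have hA0 : 0 < A := div_pos hlam0 (by positivity)
  have hB0 : 0 ≤ B := by positivity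
  have hcoer : ∀ p ∈ U, f p ≤ -A*‖p‖^2 + B*‖p‖ := by
    intro p hp
    have h1 : (inner ℝ p ghat : ℝ) ≤ ‖p‖ * ‖ghat‖ := real_inner_le_norm p ghat
    have h2 := hgrow (mulVecE Kᵀ p)
    have h3 : ‖p‖ ≤ (κ:ℝ) * ‖mulVecE Kᵀ p‖ := hκb p hp
    have h4 : ‖mulVecE Kᵀ p‖ ≤ Ct * ‖p‖ := by
      rw [hCt_def]; exact specNorm_bound Kᵀ p
    have h5 : ‖p‖^2 ≤ (κ:ℝ)^2 * ‖mulVecE Kᵀ p‖^2 := by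
      nlinarith [norm_nonneg p, norm_nonneg (mulVecE Kᵀ p)]
    have h6 : f p ≤ ‖p‖*‖ghat‖ -
        (lam/2)*(‖mulVecE Kᵀ p‖^2 - 2*μ*((s:ℝ)*‖mulVecE Kᵀ p‖)) := by
      show (inner ℝ p ghat : ℝ) - (lam/2) * ‖soft μ (mulVecE Kᵀ p)‖^2 ≤ _
      have h7 := mul_le_mul_of_nonneg_left h2 (by linarith : (0:ℝ) ≤ lam/2)
      linarith
    have h7 : lam*μ*(s:ℝ)*‖mulVecE Kᵀ p‖ ≤ lam*μ*(s:ℝ)*(Ct*‖p‖) :=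
      mul_le_mul_of_nonneg_left h4 (by positivity)
    have h8 : A*‖p‖^2 ≤ (lam/2)*‖mulVecE Kᵀ p‖^2 := by
      rw [hA_def, div_mul_eq_mul_div, div_le_iff₀ (by positivity : (0:ℝ) < 2*(κ:ℝ)^2)]
      nlinarith [h5, hlam0]
    have h6' : f p ≤ ‖p‖*‖ghat‖ - (lam/2)*‖mulVecE Kᵀ p‖^2 + lam*μ*(s:ℝ)*‖mulVecE Kᵀ p‖ := by
      calc f p ≤ ‖p‖*‖ghat‖ -
          (lam/2)*(‖mulVecE Kᵀ p‖^2 - 2*μ*((s:ℝ)*‖mulVecE Kᵀ p‖)) := h6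
        _ = ‖p‖*‖ghat‖ - (lam/2)*‖mulVecE Kᵀ p‖^2 + lam*μ*(s:ℝ)*‖mulVecE Kᵀ p‖ := by ring
    clear_value f B A Ct
    rw [hB_def]
    have hgoal : -A*‖p‖^2 + (‖ghat‖ + lam*μ*(s:ℝ)*Ct)*‖p‖ =
        -(A*‖p‖^2) + ‖p‖*‖ghat‖ + lam*μ*(s:ℝ)*(Ct*‖p‖) := by ring
    rw [hgoal]
    linarith [h6', h7, h8]
  have hcontKt : Continuous (fun p : EuclideanSpace ℝ (Fin m) => mulVecE Kᵀ p) := by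
    have he : (fun p : EuclideanSpace ℝ (Fin m) => mulVecE Kᵀ p) =
        fun p => (Matrix.toEuclideanLin Kᵀ).toContinuousLinearMap p := rfl
    rw [he]
    exact (Matrix.toEuclideanLin Kᵀ).toContinuousLinearMap.continuous
  have hcontf : Continuous f := by
    rw [hf_def]
    apply Continuous.sub
    · exact continuous_id.inner continuous_const
    · exact continuous_const.mul (((soft_lip hμ0).continuous.comp hcontKt).norm.pow 2)
  have hUclosed : IsClosed (U : Set (EuclideanSpace ℝ (Fin m))) :=
    Submodule.closed_of_finiteDimensional U
  set R := (B+1)/A with hR_def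
  have hR0 : 0 < R := div_pos (by linarith) hA0
  have hcomp : IsCompact (Metric.closedBall (0:EuclideanSpace ℝ (Fin m)) R ∩ U) :=
    (isCompact_closedBall _ _).inter_right hUclosed
  have h0mem : (0:EuclideanSpace ℝ (Fin m)) ∈
      Metric.closedBall (0:EuclideanSpace ℝ (Fin m)) R ∩ (U : Set (EuclideanSpace ℝ (Fin m))) :=
    ⟨Metric.mem_closedBall_self hR0.le, U.zero_mem⟩
  obtain ⟨pstar, hpsT, hpmax⟩ := hcomp.exists_isMaxOn ⟨0, h0mem⟩ hcontf.continuousOn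
  have hpsU : pstar ∈ U := hpsT.2
  have hf0 : f 0 = 0 := by
    show (inner ℝ (0:EuclideanSpace ℝ (Fin m)) ghat : ℝ) - (lam/2) * ‖soft μ (mulVecE Kᵀ 0)‖^2 = 0
    rw [mulVecE_zero, hsoft0, inner_zero_left, norm_zero]
    ring
  have hfps : 0 ≤ f pstar := by
    have h : f 0 ≤ f pstar := hpmax h0mem
    rw [hf0] at h
    exact h
  have hmaxU : ∀ y ∈ U, f y ≤ f pstar := by
    intro y hyU
    rcases le_or_gt ‖y‖ R with hcase | hcase
    · exact hpmax ⟨by rwa [Metric.mem_closedBall, dist_zero_right], hyU⟩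
    · have h1 := hcoer y hyU
      clear_value R B A Ct f
      have hAR : A * R = B + 1 := by
        rw [hR_def]
        field_simp
      have h2 : 0 ≤ A*‖y‖*(‖y‖ - R) :=
        mul_nonneg (mul_nonneg hA0.le (norm_nonneg y)) (by linarith)
      have h3 : (A*R)*‖y‖ = (B+1)*‖y‖ := by rw [hAR]
      nlinarith [h1, h2, h3, hR0, hcase, hfps]
  -- first-order optimality: the gradient direction must vanish
  set u := mulVecE Kᵀ pstar with hu_def
  set Sp := soft μ u with hSp_def
  set v := ghat - lam • mulVecE K Sp with hv_def
  by_cases hv0 : v = 0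
  · exact ⟨pstar, sub_eq_zero.mp hv0⟩
  · exfalso
    have hvU : v ∈ U := U.sub_mem hghat_mem (U.smul_mem _ (hU_mem _))
    have hKtv : mulVecE Kᵀ v ≠ 0 := fun h0 => hv0 (hinjU v hvU h0)
    have hvn : 0 < ‖v‖ := norm_pos_iff.mpr hv0
    set w := mulVecE Kᵀ v with hw_def
    have hwn : 0 < ‖w‖ := norm_pos_iff.mpr hKtv
    set t := ‖v‖^2 / (lam * ‖w‖^2) with ht_def
    have ht0 : 0 < t := div_pos (by positivity) (by positivity)
    have hquad : ‖soft μ (u + t • w)‖^2 ≤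
        ‖Sp‖^2 + 2*t*(∑ i, s1 μ (u i) * w i) + t^2*‖w‖^2 := by
      have h1 : ∀ i : Fin s, s1 μ ((u + t • w) i)^2 ≤
          s1 μ (u i)^2 + 2*(s1 μ (u i))*(t*(w i)) + (t*(w i))^2 := by
        intro i
        have he : (u + t • w) i = u i + t * w i := rfl
        have h := s1_descent μ (u i) (u i + t * w i) hμ0
        rw [he]
        calc s1 μ (u i + t * w i)^2 ≤
            s1 μ (u i) ^ 2 + 2 * s1 μ (u i) * (u i + t * w i - u i) + (u i + t * w i - u i) ^ 2 := h
          _ = s1 μ (u i)^2 + 2*(s1 μ (u i))*(t*(w i)) + (t*(w i))^2 := by ring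
      calc ‖soft μ (u + t • w)‖^2 = ∑ i, s1 μ ((u + t • w) i)^2 := by
            rw [normsq]; exact Finset.sum_congr rfl (fun i _ => by rw [hsoft])
        _ ≤ ∑ i, (s1 μ (u i)^2 + 2*(s1 μ (u i))*(t*(w i)) + (t*(w i))^2) :=
            Finset.sum_le_sum (fun i _ => h1 i)
        _ = ‖Sp‖^2 + 2*t*(∑ i, s1 μ (u i) * w i) + t^2*‖w‖^2 := by
            rw [Finset.sum_add_distrib, Finset.sum_add_distrib]
            have e1 : ∑ i, s1 μ (u i)^2 = ‖Sp‖^2 := by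
              rw [hSp_def, normsq]
              exact Finset.sum_congr rfl (fun i _ => by rw [hsoft])
            have e2 : ∑ i, 2*(s1 μ (u i))*(t*(w i)) = 2*t*(∑ i, s1 μ (u i) * w i) := by
              rw [Finset.mul_sum]; exact Finset.sum_congr rfl (fun i _ => by ring)
            have e3 : ∑ i, (t*(w i))^2 = t^2*‖w‖^2 := by
              rw [normsq, Finset.mul_sum]; exact Finset.sum_congr rfl (fun i _ => by ring)
            rw [e1, e2, e3]
    have hSpw : ∑ i, s1 μ (u i) * w i = (inner ℝ v (mulVecE K Sp) : ℝ) := by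
      have e1 : ∑ i, s1 μ (u i) * w i = (inner ℝ Sp w : ℝ) := by
        rw [innersum]
        exact Finset.sum_congr rfl (fun i _ => by rw [hSp_def, hsoft])
      have e2 : (inner ℝ Sp w : ℝ) = (inner ℝ v (mulVecE K Sp) : ℝ) := by
        rw [hw_def, real_inner_comm]
        exact adjE K v Sp
      rw [e1, e2]
    have hmem2 : pstar + t • v ∈ U := U.add_mem hpsU (U.smul_mem t hvU)
    have hKtp : mulVecE Kᵀ (pstar + t • v) = u + t • w := by
      rw [mulVecE_add, mulVecE_smul]
    have hvv : (inner ℝ v ghat : ℝ) - lam * (inner ℝ v (mulVecE K Sp) : ℝ) = ‖v‖^2 := by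
      have h1 : (inner ℝ v (ghat - lam • mulVecE K Sp) : ℝ) =
          (inner ℝ v ghat : ℝ) - lam * (inner ℝ v (mulVecE K Sp) : ℝ) := by
        rw [inner_sub_right, real_inner_smul_right]
      rw [← h1, ← hv_def, real_inner_self_eq_norm_sq]
    have hfexp : f pstar + (t*‖v‖^2 - (lam/2)*t^2*‖w‖^2) ≤ f (pstar + t • v) := by
      have hfp : f (pstar + t • v) =
          (inner ℝ (pstar + t • v) ghat : ℝ) -
            (lam/2) * ‖soft μ (mulVecE Kᵀ (pstar + t • v))‖^2 := by
        rw [hf_def]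
      have hfp2 : f pstar = (inner ℝ pstar ghat : ℝ) - (lam/2) * ‖Sp‖^2 := by
        rw [hf_def]
      rw [hfp, hfp2, hKtp, inner_add_left, real_inner_smul_left]
      have h9 := mul_le_mul_of_nonneg_left hquad (by linarith : (0:ℝ) ≤ lam/2)
      rw [hSpw] at h9
      have hvvt : t*((inner ℝ v ghat : ℝ) - lam * (inner ℝ v (mulVecE K Sp) : ℝ)) = t*‖v‖^2 := by
        rw [hvv]
      clear_value t w v Sp u f
      linarith [h9, hvvt]
    have hgain : 0 < t*‖v‖^2 - (lam/2)*t^2*‖w‖^2 := by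
      have he : (lam/2)*t^2*‖w‖^2 = t*((lam/2)*t*‖w‖^2) := by ring
      have he2 : (lam/2)*t*‖w‖^2 = ‖v‖^2/2 := by
        rw [ht_def]
        field_simp
      rw [he, he2]
      have h10 : t*‖v‖^2 - t*(‖v‖^2/2) = t*(‖v‖^2/2) := by ring
      rw [h10]
      exact mul_pos ht0 (by positivity)
    have hcontra := hmaxU (pstar + t • v) hmem2
    clear_value t w v Sp u R B A Ct f
    linarith [hfexp, hgain, hcontra]

set_option maxHeartbeats 1000000 in
/-- Convergence of the linearized Bregman iteration (Theorem 3.1 of the paper):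
with `0 < λ < 1/‖KᵀK‖`, the iterates `x^n` converge to the unique minimizer of
`μ‖x‖₁ + (1/(2λ))‖x‖²` over the set of minimizers of `‖Kx − g‖²`. -/
theorem stmt0 {m s : ℕ} (hms : m < s)
    (K : Matrix (Fin m) (Fin s) ℝ) (g : EuclideanSpace ℝ (Fin m))
    (μ lam : ℝ) (hμ : 0 < μ) (hlam0 : 0 < lam) (hlam1 : lam < 1 / specNorm (Kᵀ * K))
    (z x : ℕ → EuclideanSpace ℝ (Fin s))
    (hz0 : z 0 = 0) (hx0 : x 0 = 0)
    (hz : ∀ n, z (n + 1) = z n + mulVecE Kᵀ (g - mulVecE K (x n)))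
    (hx : ∀ n, x (n + 1) = lam • soft μ (z (n + 1))) :
    ∃ xstar : EuclideanSpace ℝ (Fin s),
      (∀ y, ‖mulVecE K xstar - g‖ ^ 2 ≤ ‖mulVecE K y - g‖ ^ 2) ∧
      (∀ y, (∀ w, ‖mulVecE K y - g‖ ^ 2 ≤ ‖mulVecE K w - g‖ ^ 2) →
        μ * l1norm xstar + (1 / (2 * lam)) * ‖xstar‖ ^ 2 ≤
          μ * l1norm y + (1 / (2 * lam)) * ‖y‖ ^ 2) ∧
      (∀ y, (∀ w, ‖mulVecE K y - g‖ ^ 2 ≤ ‖mulVecE K w - g‖ ^ 2) →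
        (∀ w, (∀ v, ‖mulVecE K w - g‖ ^ 2 ≤ ‖mulVecE K v - g‖ ^ 2) →
          μ * l1norm y + (1 / (2 * lam)) * ‖y‖ ^ 2 ≤
            μ * l1norm w + (1 / (2 * lam)) * ‖w‖ ^ 2) →
        y = xstar) ∧
      Tendsto x atTop (nhds xstar) := by
  classical
  have hμ0 : (0:ℝ) ≤ μ := hμ.le
  set c := specNorm (Kᵀ * K) with hc_def
  -- positivity of c and lam * c < 1
  have hc0 : 0 < c := by
    by_contra h
    push_neg at h
    have h1 : (1:ℝ) / c ≤ 0 := by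
      rcases h.lt_or_eq with h' | h'
      · exact le_of_lt (div_neg_of_pos_of_neg one_pos h')
      · simp [h']
    linarith
  have hlamc : lam * c < 1 := (lt_div_iff₀ hc0).mp hlam1
  have hlc0 : 0 < lam * c := mul_pos hlam0 hc0
  -- soft is coordinatewise s1
  have hsoft : ∀ (u : EuclideanSpace ℝ (Fin s)) i, soft μ u i = s1 μ (u i) :=
    fun u i => soft_coord hμ0 u i
  have hsoft0 : soft μ (0 : EuclideanSpace ℝ (Fin s)) = 0 := by
    ext i; rw [hsoft]; exact s1_zero μ hμ0
  -- range of K and projection of g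
  set U : Submodule ℝ (EuclideanSpace ℝ (Fin m)) := LinearMap.range (Matrix.toEuclideanLin K)
    with hU_def
  have hU_mem : ∀ v : EuclideanSpace ℝ (Fin s), mulVecE K v ∈ U := fun v => ⟨v, rfl⟩
  set ghat : EuclideanSpace ℝ (Fin m) := ↑(U.orthogonalProjectionOnto g) with hghat_def
  have hghat_mem : ghat ∈ U := (U.orthogonalProjectionOnto g).2
  have hperp : ∀ w ∈ U, (inner ℝ (g - ghat) w : ℝ) = 0 := fun w hw =>
    U.starProjection_inner_eq_zero g w hw
  have hKt_perp : mulVecE Kᵀ (g - ghat) = 0 := by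
    have h := hperp (mulVecE K (mulVecE Kᵀ (g - ghat))) (hU_mem _)
    rw [← adjE, real_inner_self_eq_norm_sq] at h
    have : ‖mulVecE Kᵀ (g - ghat)‖ = 0 := by
      have := sq_eq_zero_iff.mp h; exact this
    exact norm_eq_zero.mp this
  -- small inner-product helper: U members are orthogonal to g - ghat both ways
  have hperp' : ∀ w ∈ U, (inner ℝ w (g - ghat) : ℝ) = 0 := fun w hw => by
    rw [real_inner_comm]; exact hperp w hw
  -- Part A: existence of a fixed point qstar
  have partA : ∃ qstar : EuclideanSpace ℝ (Fin m),
      ghat = lam • mulVecE K (soft μ (mulVecE Kᵀ qstar)) :=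
    exists_dual_max K μ lam hμ0 hlam0 ghat hghat_mem
  obtain ⟨qstar, hqstar⟩ := partA
  -- Part B: the auxiliary sequence q with z n = Kᵀ q n
  obtain ⟨q, hq0, hqs⟩ : ∃ q : ℕ → EuclideanSpace ℝ (Fin m), q 0 = 0 ∧
      ∀ n, q (n+1) = q n + (ghat - lam • mulVecE K (soft μ (mulVecE Kᵀ (q n)))) :=
    ⟨fun n => Nat.rec 0 (fun _ qn => qn + (ghat - lam • mulVecE K (soft μ (mulVecE Kᵀ qn)))) n,
      rfl, fun n => rfl⟩
  have hKtg : mulVecE Kᵀ g = mulVecE Kᵀ ghat := by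
    have h := hKt_perp
    rw [mulVecE_sub] at h
    exact sub_eq_zero.mp h
  have hzx : ∀ n, z n = mulVecE Kᵀ (q n) ∧ x n = lam • soft μ (mulVecE Kᵀ (q n)) := by
    intro n
    induction n with
    | zero =>
      constructor
      · rw [hz0, hq0, mulVecE_zero]
      · rw [hx0, hq0, mulVecE_zero, hsoft0, smul_zero]
    | succ n ih =>
      obtain ⟨ihz, ihx⟩ := ih
      have hzn : z (n + 1) = mulVecE Kᵀ (q (n + 1)) := by
        rw [hz n, hqs n, ihz, ihx]
        rw [mulVecE_add, mulVecE_sub, mulVecE_sub, hKtg, mulVecE_smul, mulVecE_smul]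
      exact ⟨hzn, by rw [hx n, hzn]⟩
  -- Part C: Fejér inequality
  set γ : ℝ := 2 / (lam * c) - 1 with hγ_def
  have hγ1 : 1 ≤ γ := by
    rw [hγ_def, le_sub_iff_add_le]
    rw [le_div_iff₀ hlc0]; linarith
  have hkey : ∀ p : EuclideanSpace ℝ (Fin m),
      ghat = lam • mulVecE K (soft μ (mulVecE Kᵀ p)) →
      ∀ n, ‖q (n+1) - p‖^2 + γ * ‖q (n+1) - q n‖^2 ≤ ‖q n - p‖^2 := by
    intro p hp n
    set a := q n with ha_def
    set Sa := soft μ (mulVecE Kᵀ a) with hSa_def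
    set Sp := soft μ (mulVecE Kᵀ p) with hSp_def
    set Δ : EuclideanSpace ℝ (Fin s) := Sa - Sp with hΔ_def
    set d := q (n+1) - q n with hd_def
    have hdval : d = -(lam • mulVecE K Δ) := by
      rw [hd_def, hqs n, hp, hΔ_def, mulVecE_sub, smul_sub]
      abel
    have hexp : ‖q (n+1) - p‖^2 = ‖a - p‖^2 + 2 * (inner ℝ (a - p) d : ℝ) + ‖d‖^2 := by
      have h1 : q (n+1) - p = (a - p) + d := by rw [hd_def, ha_def]; abel
      rw [h1, norm_add_sq_real]
    have hfirm : ‖Δ‖^2 ≤ (inner ℝ (mulVecE Kᵀ a - mulVecE Kᵀ p) Δ : ℝ) := by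
      rw [normsq, innersum]
      apply Finset.sum_le_sum
      intro i _
      have hΔi : Δ i = s1 μ ((mulVecE Kᵀ a) i) - s1 μ ((mulVecE Kᵀ p) i) := by
        show Sa i - Sp i = _
        rw [hSa_def, hSp_def, hsoft, hsoft]
      have hdi : (mulVecE Kᵀ a - mulVecE Kᵀ p) i = (mulVecE Kᵀ a) i - (mulVecE Kᵀ p) i := rfl
      rw [hΔi, hdi]
      have h := s1_firm μ ((mulVecE Kᵀ a) i) ((mulVecE Kᵀ p) i) hμ0
      nlinarith [h]
    have hinnerd : (inner ℝ (a - p) d : ℝ) = -lam * (inner ℝ (mulVecE Kᵀ a - mulVecE Kᵀ p) Δ : ℝ) := by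
      rw [hdval, inner_neg_right, real_inner_smul_right, ← mulVecE_sub, ← adjE]
      ring
    have hnd : ‖d‖^2 ≤ lam^2 * c * ‖Δ‖^2 := by
      rw [hdval, norm_neg, norm_smul]
      have h1 : ‖mulVecE K Δ‖^2 ≤ c * ‖Δ‖^2 := norm_mulVec_sq_le K Δ
      have h2 : ‖lam‖ = lam := abs_of_pos hlam0
      rw [mul_pow, h2]
      nlinarith [sq_nonneg lam]
    have hin2 : (inner ℝ (a - p) d : ℝ) ≤ -lam * ‖Δ‖^2 := by
      rw [hinnerd]
      nlinarith [hfirm]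
    have h1γ : (1 + γ) = 2/(lam*c) := by rw [hγ_def]; ring
    have hd2 : (1+γ) * ‖d‖^2 ≤ 2 * lam * ‖Δ‖^2 := by
      rw [h1γ]
      calc 2/(lam*c) * ‖d‖^2 ≤ 2/(lam*c) * (lam^2*c*‖Δ‖^2) := by
            apply mul_le_mul_of_nonneg_left hnd (by positivity)
        _ = 2*lam*‖Δ‖^2 := by field_simp
    linarith [hexp, hin2, hd2]
  -- Part D: convergence of q to a fixed point qbar
  have partD : ∃ qbar : EuclideanSpace ℝ (Fin m),
      ghat = lam • mulVecE K (soft μ (mulVecE Kᵀ qbar)) ∧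
      Tendsto q atTop (nhds qbar) := by
    have hkey' := hkey qstar hqstar
    have hmono : ∀ p, ghat = lam • mulVecE K (soft μ (mulVecE Kᵀ p)) →
        ∀ n, ‖q (n+1) - p‖ ≤ ‖q n - p‖ := by
      intro p hp n
      have h := hkey p hp n
      have h2 : 0 ≤ γ * ‖q (n+1) - q n‖^2 := mul_nonneg (by linarith) (sq_nonneg _)
      exact le_of_sq_le_sq' _ _ (norm_nonneg _) (by linarith)
    have hbound : ∀ n, ‖q n - qstar‖ ≤ ‖q 0 - qstar‖ := by
      intro n
      induction n with
      | zero => exact le_refl _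
      | succ n ih => exact (hmono qstar hqstar n).trans ih
    have htel : ∀ N, γ * ∑ n ∈ Finset.range N, ‖q (n+1) - q n‖^2 + ‖q N - qstar‖^2 ≤
        ‖q 0 - qstar‖^2 := by
      intro N
      induction N with
      | zero => simp
      | succ N ih =>
        rw [Finset.sum_range_succ, mul_add]
        have h := hkey' N
        linarith
    have hγ0 : (0:ℝ) < γ := by linarith
    have hsumb : ∀ N, ∑ n ∈ Finset.range N, ‖q (n+1) - q n‖^2 ≤ ‖q 0 - qstar‖^2 / γ := by
      intro N
      rw [le_div_iff₀ hγ0]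
      linarith [htel N, sq_nonneg ‖q N - qstar‖]
    have hsummable : Summable (fun n => ‖q (n+1) - q n‖^2) :=
      summable_of_sum_range_le (fun n => sq_nonneg _) hsumb
    have hto0sq := hsummable.tendsto_atTop_zero
    have hto0 : Tendsto (fun n => ‖q (n+1) - q n‖) atTop (nhds 0) := by
      have h := (Real.continuous_sqrt.tendsto 0).comp hto0sq
      simp only [Function.comp_def, Real.sqrt_zero] at h
      exact h.congr (fun n => Real.sqrt_sq (norm_nonneg _))
    have hball : ∀ n, q n ∈ Metric.closedBall qstar (‖q 0 - qstar‖) := by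
      intro n
      rw [Metric.mem_closedBall, dist_eq_norm]
      exact hbound n
    obtain ⟨qbar, -, φ, hφ, hφlim⟩ := tendsto_subseq_of_bounded Metric.isBounded_closedBall hball
    have hsub0 : Tendsto (fun k => ‖q (φ k) - qbar‖) atTop (nhds 0) := by
      have h := (tendsto_iff_norm_sub_tendsto_zero).mp hφlim
      exact h
    have hstep : ∀ n, q (n+1) - q n = ghat - lam • mulVecE K (soft μ (mulVecE Kᵀ (q n))) := by
      intro n; rw [hqs n]; abel
    have hlipB : ∀ u v : EuclideanSpace ℝ (Fin m),
        ‖(ghat - lam • mulVecE K (soft μ (mulVecE Kᵀ u))) -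
         (ghat - lam • mulVecE K (soft μ (mulVecE Kᵀ v)))‖ ≤
          lam * specNorm K * specNorm Kᵀ * ‖u - v‖ := by
      intro u v
      have e1 : (ghat - lam • mulVecE K (soft μ (mulVecE Kᵀ u))) -
          (ghat - lam • mulVecE K (soft μ (mulVecE Kᵀ v))) =
          -(lam • (mulVecE K (soft μ (mulVecE Kᵀ u)) - mulVecE K (soft μ (mulVecE Kᵀ v)))) := by
        rw [smul_sub]; abel
      rw [e1, norm_neg, norm_smul, Real.norm_eq_abs, abs_of_pos hlam0, ← mulVecE_sub]
      have h1 : ‖mulVecE K (soft μ (mulVecE Kᵀ u) - soft μ (mulVecE Kᵀ v))‖ ≤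
          specNorm K * ‖soft μ (mulVecE Kᵀ u) - soft μ (mulVecE Kᵀ v)‖ := specNorm_bound K _
      have h2 : ‖soft μ (mulVecE Kᵀ u) - soft μ (mulVecE Kᵀ v)‖ ≤ ‖mulVecE Kᵀ u - mulVecE Kᵀ v‖ :=
        soft_norm_le hμ0 _ _
      have h3 : ‖mulVecE Kᵀ u - mulVecE Kᵀ v‖ = ‖mulVecE Kᵀ (u - v)‖ := by rw [mulVecE_sub]
      have h4 := specNorm_bound Kᵀ (u - v)
      have h5 : (0:ℝ) ≤ specNorm K := norm_nonneg _
      rw [mul_assoc, mul_assoc]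
      apply mul_le_mul_of_nonneg_left _ hlam0.le
      calc ‖mulVecE K (soft μ (mulVecE Kᵀ u) - soft μ (mulVecE Kᵀ v))‖ ≤
            specNorm K * ‖soft μ (mulVecE Kᵀ u) - soft μ (mulVecE Kᵀ v)‖ := h1
        _ ≤ specNorm K * ‖mulVecE Kᵀ (u - v)‖ := by
            apply mul_le_mul_of_nonneg_left _ h5
            rw [← h3]; exact h2
        _ ≤ specNorm K * (specNorm Kᵀ * ‖u - v‖) := mul_le_mul_of_nonneg_left h4 h5
    have hlim1 : Tendsto (fun k => ghat - lam • mulVecE K (soft μ (mulVecE Kᵀ (q (φ k)))))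
        atTop (nhds (ghat - lam • mulVecE K (soft μ (mulVecE Kᵀ qbar)))) := by
      rw [tendsto_iff_norm_sub_tendsto_zero]
      apply squeeze_zero (fun k => norm_nonneg _) (fun k => hlipB (q (φ k)) qbar)
      have h := hsub0.const_mul (lam * specNorm K * specNorm Kᵀ)
      simpa [mul_assoc] using h
    have hlim2 : Tendsto (fun k => q (φ k + 1) - q (φ k)) atTop (nhds 0) := by
      rw [tendsto_zero_iff_norm_tendsto_zero]
      exact hto0.comp hφ.tendsto_atTop
    have heq : (fun k => q (φ k + 1) - q (φ k)) =
        fun k => ghat - lam • mulVecE K (soft μ (mulVecE Kᵀ (q (φ k)))) :=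
      funext fun k => hstep (φ k)
    rw [heq] at hlim2
    have hfix : ghat - lam • mulVecE K (soft μ (mulVecE Kᵀ qbar)) = 0 :=
      tendsto_nhds_unique hlim1 hlim2
    have hqbar2 : ghat = lam • mulVecE K (soft μ (mulVecE Kᵀ qbar)) := sub_eq_zero.mp hfix
    refine ⟨qbar, hqbar2, ?_⟩
    have hmono2 : Antitone (fun n => ‖q n - qbar‖) :=
      antitone_nat_of_succ_le (fun n => hmono qbar hqbar2 n)
    rcases tendsto_of_antitone hmono2 with h | ⟨l, hl⟩
    · exfalso
      obtain ⟨n, hn⟩ := (h.eventually (eventually_lt_atBot 0)).exists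
      exact absurd (norm_nonneg _) (not_le.mpr hn)
    · have h1 : Tendsto (fun k => ‖q (φ k) - qbar‖) atTop (nhds l) := hl.comp hφ.tendsto_atTop
      have hl0 : l = 0 := tendsto_nhds_unique h1 hsub0
      rw [tendsto_iff_norm_sub_tendsto_zero]
      exact hl0 ▸ hl
  obtain ⟨qbar, hqbar, hqtend⟩ := partD
  set zbar : EuclideanSpace ℝ (Fin s) := mulVecE Kᵀ qbar with hzbar_def
  set xstar : EuclideanSpace ℝ (Fin s) := lam • soft μ zbar with hxstar_def
  have hKxstar : mulVecE K xstar = ghat := by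
    rw [hxstar_def, mulVecE_smul, ← hqbar]
  -- Part E: x n → xstar
  have partE : Tendsto x atTop (nhds xstar) := by
    have hb : ∀ n, ‖x n - xstar‖ ≤ lam * specNorm Kᵀ * ‖q n - qbar‖ := by
      intro n
      rw [(hzx n).2, hxstar_def, hzbar_def, ← smul_sub, norm_smul, Real.norm_eq_abs, abs_of_pos hlam0, mul_assoc]
      apply mul_le_mul_of_nonneg_left _ hlam0.le
      have h1 : ‖soft μ (mulVecE Kᵀ (q n)) - soft μ (mulVecE Kᵀ qbar)‖ ≤
          ‖mulVecE Kᵀ (q n) - mulVecE Kᵀ qbar‖ := soft_norm_le hμ0 _ _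
      have h2 : ‖mulVecE Kᵀ (q n) - mulVecE Kᵀ qbar‖ = ‖mulVecE Kᵀ (q n - qbar)‖ := by
        rw [mulVecE_sub]
      have h3 := specNorm_bound Kᵀ (q n - qbar)
      calc ‖soft μ (mulVecE Kᵀ (q n)) - soft μ (mulVecE Kᵀ qbar)‖ ≤
            ‖mulVecE Kᵀ (q n - qbar)‖ := h2 ▸ h1
        _ ≤ specNorm Kᵀ * ‖q n - qbar‖ := h3
    rw [tendsto_iff_norm_sub_tendsto_zero]
    have hq0' : Tendsto (fun n => ‖q n - qbar‖) atTop (nhds 0) :=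
      (tendsto_iff_norm_sub_tendsto_zero).mp hqtend
    apply squeeze_zero (fun n => norm_nonneg _) hb
    have h := hq0'.const_mul (lam * specNorm Kᵀ)
    simpa using h
  -- Part F: feasibility characterization
  have pyth : ∀ y, ‖mulVecE K y - g‖ ^ 2 = ‖mulVecE K y - ghat‖ ^ 2 + ‖ghat - g‖ ^ 2 := by
    intro y
    have hmem : mulVecE K y - ghat ∈ U := U.sub_mem (hU_mem y) hghat_mem
    have hcross : (inner ℝ (mulVecE K y - ghat) (ghat - g) : ℝ) = 0 := by
      have h := hperp' _ hmem
      rw [show ghat - g = -(g - ghat) by abel, inner_neg_right, h, neg_zero]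
    calc ‖mulVecE K y - g‖ ^ 2 = ‖(mulVecE K y - ghat) + (ghat - g)‖ ^ 2 := by
          rw [sub_add_sub_cancel]
      _ = ‖mulVecE K y - ghat‖ ^ 2 + ‖ghat - g‖ ^ 2 := by
          rw [norm_add_sq_real, hcross]; ring
  have hfeas : ∀ y, (∀ w, ‖mulVecE K y - g‖ ^ 2 ≤ ‖mulVecE K w - g‖ ^ 2) ↔ mulVecE K y = ghat := by
    intro y
    constructor
    · intro h
      have h1 := h xstar
      rw [pyth y, pyth xstar, hKxstar, sub_self, norm_zero] at h1
      have h2 : ‖mulVecE K y - ghat‖ ^ 2 ≤ 0 := by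
        have h0 : (0:ℝ) ^ 2 = 0 := by norm_num
        linarith
      have h3 : ‖mulVecE K y - ghat‖ = 0 :=
        pow_eq_zero_iff (n := 2) (by norm_num) |>.mp (le_antisymm h2 (sq_nonneg _))
      exact sub_eq_zero.mp (norm_eq_zero.mp h3)
    · intro h w
      rw [pyth y, pyth w, h, sub_self, norm_zero]
      have h0 : (0:ℝ) ^ 2 = 0 := by norm_num
      linarith [sq_nonneg ‖mulVecE K w - ghat‖]
  -- optimality of xstar over the feasible set
  have hopt : ∀ y, mulVecE K y = ghat →
      μ * l1norm xstar + (1 / (2 * lam)) * ‖xstar‖ ^ 2 ≤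
        μ * l1norm y + (1 / (2 * lam)) * ‖y‖ ^ 2 := by
    intro y hy
    have hxi : ∀ i, xstar i = lam * s1 μ (zbar i) := by
      intro i
      show lam * (soft μ zbar i) = _
      rw [hsoft]
    have hsum : ∑ i, (2*lam*μ*|xstar i| + (xstar i)^2 + 2*lam*(zbar i)*(y i - xstar i)) ≤
        ∑ i, (2*lam*μ*|y i| + (y i)^2) := by
      apply Finset.sum_le_sum
      intro i _
      rw [hxi i]
      exact s1_subgrad μ lam (zbar i) (y i) hμ0 hlam0
    have hinner : (inner ℝ zbar (y - xstar) : ℝ) = 0 := by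
      rw [hzbar_def, adjE, mulVecE_sub, hy, hKxstar, sub_self, inner_zero_right]
    have hA : ∑ i, (2*lam*μ*|xstar i| + (xstar i)^2 + 2*lam*(zbar i)*(y i - xstar i)) =
        2*lam*μ*(l1norm xstar) + ‖xstar‖^2 + 2*lam*(inner ℝ zbar (y - xstar) : ℝ) := by
      rw [l1norm, normsq, innersum, Finset.mul_sum, Finset.mul_sum,
        ← Finset.sum_add_distrib, ← Finset.sum_add_distrib]
      apply Finset.sum_congr rfl
      intro i _
      have h1 : (y - xstar) i = y i - xstar i := rfl
      rw [h1]; ring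
    have hB : ∑ i, (2*lam*μ*|y i| + (y i)^2) = 2*lam*μ*(l1norm y) + ‖y‖^2 := by
      rw [l1norm, normsq, Finset.mul_sum, ← Finset.sum_add_distrib]
    rw [hA, hB, hinner] at hsum
    have e1 : μ * l1norm xstar + (1/(2*lam)) * ‖xstar‖^2 =
        (1/(2*lam)) * (2*lam*μ*(l1norm xstar) + ‖xstar‖^2) := by
      field_simp
    have e2 : μ * l1norm y + (1/(2*lam)) * ‖y‖^2 =
        (1/(2*lam)) * (2*lam*μ*(l1norm y) + ‖y‖^2) := by
      field_simp
    rw [e1, e2]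
    have hpos : (0:ℝ) ≤ 1/(2*lam) := by positivity
    apply mul_le_mul_of_nonneg_left _ hpos
    linarith
  refine ⟨xstar, ?_, ?_, ?_, partE⟩
  · intro y
    exact (hfeas xstar).mpr hKxstar y
  · intro y hy
    exact hopt y ((hfeas y).mp hy)
  · -- uniqueness
    intro y hy hopty
    have hyfeas := (hfeas y).mp hy
    have hJ1 := hopty xstar ((hfeas xstar).mpr hKxstar)
    have hJ2 := hopt y hyfeas
    set mid : EuclideanSpace ℝ (Fin s) := (2:ℝ)⁻¹ • (y + xstar) with hmid_def
    have hmidc : ∀ i, mid i = (y i + xstar i)/2 := by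
      intro i
      show (2:ℝ)⁻¹ * ((y + xstar) i) = _
      have h1 : (y + xstar) i = y i + xstar i := rfl
      rw [h1]; ring
    have hmidfeas : mulVecE K mid = ghat := by
      rw [hmid_def, mulVecE_smul, mulVecE_add, hyfeas, hKxstar, ← two_smul ℝ ghat, smul_smul]
      norm_num
    have hl1mid : l1norm mid ≤ (l1norm y + l1norm xstar)/2 := by
      have h1 : (l1norm y + l1norm xstar)/2 = ∑ i, (|y i| + |xstar i|)/2 := by
        rw [l1norm, l1norm, ← Finset.sum_add_distrib, Finset.sum_div]
      rw [l1norm, h1]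
      apply Finset.sum_le_sum
      intro i _
      rw [hmidc i, abs_div, abs_two]
      gcongr
      exact abs_add_le _ _
    have hnm : ‖mid‖^2 = (‖y‖^2 + ‖xstar‖^2)/2 - ‖y - xstar‖^2/4 := by
      rw [normsq, normsq, normsq, normsq, ← Finset.sum_add_distrib, Finset.sum_div,
        Finset.sum_div, ← Finset.sum_sub_distrib]
      apply Finset.sum_congr rfl
      intro i _
      have h1 : (y - xstar) i = y i - xstar i := rfl
      rw [hmidc i, h1]; ring
    have hmido := hopt mid hmidfeas
    have hμl1 := mul_le_mul_of_nonneg_left hl1mid hμ0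
    have hnm' := congrArg (fun r => (1/(2*lam)) * r) hnm
    have hfin : (1/(2*lam)) * (‖y - xstar‖^2/4) ≤ 0 := by
      linarith [hmido, hμl1, hnm', hJ1, hJ2]
    have h0 : ‖y - xstar‖ = 0 := by
      by_contra hne
      have h1 : 0 < ‖y - xstar‖ := (norm_nonneg _).lt_of_ne (Ne.symm hne)
      have h2 : 0 < (1/(2*lam)) * (‖y - xstar‖^2/4) := by positivity
      linarith
    exact sub_eq_zero.mp (norm_eq_zero.mp h0)
end

section
/- Let C be a nonzero real N×N matrix, r ∈ ℝ^N with r ≠ 0, and 0 < q < 1. If α > 0 satisfies α‖(CCᵀ + αI)⁻¹r‖ = q‖r‖, then α ≤ q‖C‖²/(1 − q) and ‖(CCᵀ + αI)⁻¹r‖ = (q/α)‖r‖ ≥ ((1 − q)/‖C‖²)·‖r‖. -/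
open Matrix Filter

/-- If `α > 0` satisfies `α‖(CCᵀ + αI)⁻¹r‖ = q‖r‖`, then `α ≤ q‖C‖²/(1 − q)` and
`‖(CCᵀ + αI)⁻¹r‖ = (q/α)‖r‖ ≥ ((1 − q)/‖C‖²)‖r‖`. -/
theorem stmt9 {N : ℕ} (C : Matrix (Fin N) (Fin N) ℝ) (hC : C ≠ 0)
    (r : EuclideanSpace ℝ (Fin N)) (hr : r ≠ 0)
    (q : ℝ) (hq0 : 0 < q) (hq1 : q < 1)
    (α : ℝ) (hα : 0 < α)
    (hαeq : α * ‖mulVecE (C * Cᵀ + α • (1 : Matrix (Fin N) (Fin N) ℝ))⁻¹ r‖ = q * ‖r‖) :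
    α ≤ q * specNorm C ^ 2 / (1 - q) ∧
    ‖mulVecE (C * Cᵀ + α • (1 : Matrix (Fin N) (Fin N) ℝ))⁻¹ r‖ = (q / α) * ‖r‖ ∧
    (q / α) * ‖r‖ ≥ ((1 - q) / specNorm C ^ 2) * ‖r‖ := by
  open scoped Matrix.Norms.L2Operator in
  set M := C * Cᵀ + α • (1 : Matrix (Fin N) (Fin N) ℝ) with hM
  have hCt : Cᵀ = Cᴴ := (conjTranspose_eq_transpose_of_trivial C).symm
  have hMpd : M.PosDef := by
    refine Matrix.PosDef.posSemidef_add ?_ ?_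
    · rw [hCt]; exact Matrix.posSemidef_self_mul_conjTranspose C
    · rw [Matrix.smul_one_eq_diagonal]
      exact Matrix.PosDef.diagonal fun _ => hα
  have hMu : IsUnit M.det := (Matrix.isUnit_iff_isUnit_det M).mp hMpd.isUnit
  -- norms
  have hs : specNorm C = ‖C‖ := (Matrix.l2_opNorm_def C).symm
  have hCpos : (0 : ℝ) < ‖C‖ := norm_pos_iff.mpr hC
  have h1 : ‖(1 : Matrix (Fin N) (Fin N) ℝ)‖ ≤ 1 := by
    rw [Matrix.cstar_norm_def, _root_.map_one, ContinuousLinearMap.one_def]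
    exact ContinuousLinearMap.norm_id_le
  have hMnorm : ‖M‖ ≤ ‖C‖ ^ 2 + α := by
    calc ‖M‖ ≤ ‖C * Cᵀ‖ + ‖α • (1 : Matrix (Fin N) (Fin N) ℝ)‖ := norm_add_le _ _
    _ ≤ ‖C‖ * ‖Cᵀ‖ + |α| * ‖(1 : Matrix (Fin N) (Fin N) ℝ)‖ := by
        rw [norm_smul, Real.norm_eq_abs]
        exact add_le_add (Matrix.l2_opNorm_mul C Cᵀ) le_rfl
    _ ≤ ‖C‖ ^ 2 + α := by
        rw [hCt, Matrix.l2_opNorm_conjTranspose, ← sq]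
        have : |α| * ‖(1 : Matrix (Fin N) (Fin N) ℝ)‖ ≤ α := by
          rw [abs_of_pos hα]
          nlinarith
        linarith
  set x := mulVecE M⁻¹ r with hx
  -- recover r from x
  have hrec : mulVecE M x = r := by
    simp only [hx, mulVecE, Matrix.mulVec_mulVec, Matrix.mul_nonsing_inv M hMu,
      Matrix.one_mulVec]
  have hkey0 : ‖r‖ ≤ ‖M‖ * ‖x‖ := by
    have := Matrix.l2_opNorm_mulVec M x
    rw [show ((EuclideanSpace.equiv (Fin N) ℝ).symm <| M *ᵥ x) = mulVecE M x from rfl,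
      hrec] at this
    exact this
  have hrpos : (0 : ℝ) < ‖r‖ := norm_pos_iff.mpr hr
  have hxval : ‖x‖ = q / α * ‖r‖ := by
    field_simp
    linarith [hαeq]
  have hkey : α * (1 - q) ≤ q * ‖C‖ ^ 2 := by
    have h2 : ‖r‖ ≤ (‖C‖ ^ 2 + α) * (q / α * ‖r‖) := by
      calc ‖r‖ ≤ ‖M‖ * ‖x‖ := hkey0
      _ ≤ (‖C‖ ^ 2 + α) * ‖x‖ := by
          exact mul_le_mul_of_nonneg_right hMnorm (norm_nonneg _)
      _ = (‖C‖ ^ 2 + α) * (q / α * ‖r‖) := by rw [hxval]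
    have h3 : α * ‖r‖ ≤ (‖C‖ ^ 2 + α) * q * ‖r‖ := by
      calc α * ‖r‖ ≤ α * ((‖C‖ ^ 2 + α) * (q / α * ‖r‖)) :=
            mul_le_mul_of_nonneg_left h2 hα.le
      _ = (‖C‖ ^ 2 + α) * q * ‖r‖ := by field_simp
    have h4 : α ≤ (‖C‖ ^ 2 + α) * q := (mul_le_mul_iff_of_pos_right hrpos).mp h3
    nlinarith
  have hq1' : (0 : ℝ) < 1 - q := by linarith
  refine ⟨?_, ?_, ?_⟩
  · rw [hs, le_div_iff₀ hq1']
    nlinarith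
  · exact hxval
  · have h4 : (1 - q) / specNorm C ^ 2 ≤ q / α := by
      rw [hs, div_le_div_iff₀ (by positivity) hα]
      nlinarith
    exact mul_le_mul_of_nonneg_right h4 (norm_nonneg _)
end

section
/- Let C be an invertible real N×N matrix, r ∈ ℝ^N with r ≠ 0, and 0 < q < 1. Then there exists a unique α > 0 such that α‖(CCᵀ + αI)⁻¹r‖ = q‖r‖. -/
open Matrix Filter

lemma normSqEq {N : ℕ} (v : EuclideanSpace ℝ (Fin N)) : ‖v‖ ^ 2 = ∑ i, v i ^ 2 := by
  rw [EuclideanSpace.norm_eq, Real.sq_sqrt (by positivity)]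
  simp [Real.norm_eq_abs, sq_abs]

lemma dotMulVecSelf {N : ℕ} (A : Matrix (Fin N) (Fin N) ℝ) (h : Aᵀ * A = 1)
    (w : Fin N → ℝ) : (A *ᵥ w) ⬝ᵥ (A *ᵥ w) = w ⬝ᵥ w := by
  have hv : (A *ᵥ w) ᵥ* A = w := by
    rw [← vecMul_transpose, vecMul_vecMul, h, vecMul_one]
  rw [dotProduct_mulVec, hv]

lemma sumSqDot {N : ℕ} (w : Fin N → ℝ) : ∑ i, w i ^ 2 = w ⬝ᵥ w := by
  simp [dotProduct, sq]

lemma auxScalar {n : ℕ} (lam c : Fin n → ℝ) (hlam : ∀ i, 0 < lam i)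
    (hc : ∃ i, c i ≠ 0) (q : ℝ) (hq0 : 0 < q) (hq1 : q < 1) :
    ∃! α : ℝ, 0 < α ∧
      ∑ i, (α / (lam i + α)) ^ 2 * c i ^ 2 = q ^ 2 * ∑ i, c i ^ 2 := by
  obtain ⟨i₀, hi₀⟩ := hc
  have hne : Nonempty (Fin n) := ⟨i₀⟩
  set g : ℝ → ℝ := fun α => ∑ i, (α / (lam i + α)) ^ 2 * c i ^ 2 with hg
  set S := ∑ i, c i ^ 2 with hS
  have hSpos : 0 < S :=
    Finset.sum_pos' (fun i _ => sq_nonneg _) ⟨i₀, Finset.mem_univ _, by positivity⟩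
  have hmono : StrictMonoOn g (Set.Ioi 0) := by
    intro x hx y hy hxy
    simp only [Set.mem_Ioi] at hx hy
    apply Finset.sum_lt_sum
    · intro i _
      have hli := hlam i
      have h1 : x / (lam i + x) ≤ y / (lam i + y) := by
        rw [div_le_div_iff₀ (by linarith) (by linarith)]
        nlinarith
      have h2 : 0 ≤ x / (lam i + x) := by positivity
      exact mul_le_mul_of_nonneg_right (pow_le_pow_left₀ h2 h1 2) (sq_nonneg _)
    · refine ⟨i₀, Finset.mem_univ _, ?_⟩
      have hli := hlam i₀
      have h1 : x / (lam i₀ + x) < y / (lam i₀ + y) := by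
        rw [div_lt_div_iff₀ (by linarith) (by linarith)]
        nlinarith
      have h2 : 0 ≤ x / (lam i₀ + x) := by positivity
      have h3 : (0:ℝ) < c i₀ ^ 2 := by positivity
      exact mul_lt_mul_of_pos_right (pow_lt_pow_left₀ h1 h2 two_ne_zero) h3
  set lmin := Finset.univ.inf' Finset.univ_nonempty lam with hlmin
  set lmax := Finset.univ.sup' Finset.univ_nonempty lam with hlmax
  have hlminpos : 0 < lmin := by
    obtain ⟨j, _, hj⟩ := Finset.exists_mem_eq_inf' Finset.univ_nonempty lam
    rw [hlmin, hj]; exact hlam j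
  have hlmaxpos : 0 < lmax := lt_of_lt_of_le (hlam i₀) (Finset.le_sup' lam (Finset.mem_univ i₀))
  have h1q : 0 < 1 - q := by linarith
  set a := q * lmin with ha
  set b := 2 * q * lmax / (1 - q) with hb
  have hapos : 0 < a := by positivity
  have hbpos : 0 < b := by positivity
  have hkeyb : (1 - q) * b = 2 * q * lmax := by
    rw [hb, mul_comm, div_mul_cancel₀ _ h1q.ne']
  have hab : a ≤ b := by
    have h1 : q * lmin ≤ q * lmax :=
      mul_le_mul_of_nonneg_left (le_trans (Finset.inf'_le lam (Finset.mem_univ i₀))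
        (Finset.le_sup' lam (Finset.mem_univ i₀))) hq0.le
    nlinarith
  have hga : g a ≤ q ^ 2 * S := by
    rw [hS, Finset.mul_sum]
    apply Finset.sum_le_sum
    intro i _
    have hli := hlam i
    have hal : a ≤ q * lam i :=
      mul_le_mul_of_nonneg_left (Finset.inf'_le lam (Finset.mem_univ i)) hq0.le
    have hr1 : a / (lam i + a) ≤ q := by
      rw [div_le_iff₀ (by linarith)]
      nlinarith
    exact mul_le_mul_of_nonneg_right (pow_le_pow_left₀ (by positivity) hr1 2) (sq_nonneg _)
  have hgb : q ^ 2 * S ≤ g b := by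
    rw [hS, Finset.mul_sum]
    apply Finset.sum_le_sum
    intro i _
    have hli := hlam i
    have hil : lam i ≤ lmax := Finset.le_sup' lam (Finset.mem_univ i)
    have hr1 : q ≤ b / (lam i + b) := by
      rw [le_div_iff₀ (by linarith)]
      nlinarith
    exact mul_le_mul_of_nonneg_right (pow_le_pow_left₀ hq0.le hr1 2) (sq_nonneg _)
  have hcont : ContinuousOn g (Set.Icc a b) := by
    apply continuousOn_finset_sum
    intro i _
    apply ContinuousOn.mul _ continuousOn_const
    apply ContinuousOn.pow
    apply ContinuousOn.div continuousOn_id (continuousOn_const.add continuousOn_id)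
    intro x hx
    have := hlam i
    have := hx.1
    exact ne_of_gt (by change 0 < lam i + x; linarith)
  obtain ⟨α, hαmem, hα⟩ := intermediate_value_Icc hab hcont ⟨hga, hgb⟩
  have hαpos : 0 < α := lt_of_lt_of_le hapos hαmem.1
  refine ⟨α, ⟨hαpos, hα⟩, ?_⟩
  intro y hy
  exact hmono.injOn (Set.mem_Ioi.mpr hy.1) (Set.mem_Ioi.mpr hαpos) (hy.2.trans hα.symm)

/-- For an invertible matrix `C`, a nonzero vector `r` and `0 < q < 1`, there is a
unique `α > 0` with `α‖(CCᵀ + αI)⁻¹r‖ = q‖r‖`. -/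
theorem stmt12 {N : ℕ} (C : Matrix (Fin N) (Fin N) ℝ) (hC : IsUnit C)
    (r : EuclideanSpace ℝ (Fin N)) (hr : r ≠ 0)
    (q : ℝ) (hq0 : 0 < q) (hq1 : q < 1) :
    ∃! α : ℝ, 0 < α ∧
      α * ‖mulVecE (C * Cᵀ + α • (1 : Matrix (Fin N) (Fin N) ℝ))⁻¹ r‖ = q * ‖r‖ := by
  classical
  have hCT : Cᴴ = Cᵀ := Matrix.conjTranspose_eq_transpose_of_trivial C
  have hpsd : (C * Cᵀ).PosSemidef := hCT ▸ Matrix.posSemidef_self_mul_conjTranspose C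
  have hM : (C * Cᵀ).IsHermitian := hpsd.1
  set lam := hM.eigenvalues with hlamdef
  have hdet : (C * Cᵀ).det ≠ 0 := by
    rw [Matrix.det_mul, Matrix.det_transpose]
    have hdC : (C.det) ≠ 0 := ((Matrix.isUnit_iff_isUnit_det C).mp hC).ne_zero
    exact mul_ne_zero hdC hdC
  have hlam : ∀ i, 0 < lam i := by
    intro i
    rcases (hpsd.eigenvalues_nonneg i).lt_or_eq with h | h
    · exact h
    · exfalso
      apply hdet
      have hprod := hM.det_eq_prod_eigenvalues
      rw [hprod]
      exact Finset.prod_eq_zero (Finset.mem_univ i) (by exact_mod_cast h.symm)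
  set U : Matrix (Fin N) (Fin N) ℝ := (hM.eigenvectorUnitary : Matrix (Fin N) (Fin N) ℝ) with hUdef
  have hU1 : U * star U = 1 := Matrix.mem_unitaryGroup_iff.mp hM.eigenvectorUnitary.2
  have hU2 : star U * U = 1 := Matrix.mem_unitaryGroup_iff'.mp hM.eigenvectorUnitary.2
  have hspec : C * Cᵀ = U * Matrix.diagonal lam * star U := by
    have h := hM.spectral_theorem
    rw [h, Unitary.conjStarAlgAut_apply]; rfl
  set c : Fin N → ℝ := (star U) *ᵥ r with hcdef
  have hsumc : ∑ i, c i ^ 2 = ‖r‖ ^ 2 := by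
    rw [normSqEq, sumSqDot, sumSqDot]
    have hT : (star U)ᵀ * (star U) = 1 := by
      have h1 : (star U)ᵀ = U := by
        rw [show star U = Uᴴ from rfl, Matrix.conjTranspose_eq_transpose_of_trivial,
          Matrix.transpose_transpose]
      rw [h1, hU1]
    exact dotMulVecSelf (star U) hT r
  have hcne : ∃ i, c i ≠ 0 := by
    by_contra h
    push_neg at h
    have h0 : ‖r‖ ^ 2 = 0 := by
      rw [← hsumc]
      exact Finset.sum_eq_zero fun i _ => by rw [h i]; ring
    exact hr (norm_eq_zero.mp (by nlinarith [norm_nonneg r]))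
  have key : ∀ α : ℝ, 0 < α →
      ((α * ‖mulVecE (C * Cᵀ + α • (1 : Matrix (Fin N) (Fin N) ℝ))⁻¹ r‖ = q * ‖r‖)
        ↔ ∑ i, (α / (lam i + α)) ^ 2 * c i ^ 2 = q ^ 2 * ∑ i, c i ^ 2) := by
    intro α hα
    set e : Fin N → ℝ := fun i => lam i + α with he
    have hepos : ∀ i, 0 < e i := fun i => by have := hlam i; simp only [he]; linarith
    have hd : Matrix.diagonal lam + α • (1 : Matrix (Fin N) (Fin N) ℝ) = Matrix.diagonal e := by
      rw [Matrix.smul_one_eq_diagonal, ← Matrix.diagonal_add]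
    have hAeq : C * Cᵀ + α • (1 : Matrix (Fin N) (Fin N) ℝ) = U * Matrix.diagonal e * star U := by
      calc C * Cᵀ + α • (1 : Matrix (Fin N) (Fin N) ℝ)
          = U * Matrix.diagonal lam * star U + α • (U * star U) := by rw [hspec, hU1]
        _ = U * (Matrix.diagonal lam + α • (1 : Matrix (Fin N) (Fin N) ℝ)) * star U := by
            rw [Matrix.mul_add, Matrix.add_mul]
            congr 1
            rw [mul_smul_comm, mul_one, smul_mul_assoc]
        _ = U * Matrix.diagonal e * star U := by rw [hd]
    have hinv : (U * Matrix.diagonal e * star U)⁻¹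
        = U * Matrix.diagonal (fun i => (e i)⁻¹) * star U := by
      apply Matrix.inv_eq_right_inv
      calc (U * Matrix.diagonal e * star U) * (U * Matrix.diagonal (fun i => (e i)⁻¹) * star U)
          = U * (Matrix.diagonal e * (star U * U) * Matrix.diagonal (fun i => (e i)⁻¹)) * star U := by
            simp only [Matrix.mul_assoc]
        _ = 1 := by
            rw [hU2, Matrix.mul_one, Matrix.diagonal_mul_diagonal]
            have h1 : (fun i => e i * (e i)⁻¹) = fun _ : Fin N => (1:ℝ) :=
              funext fun i => mul_inv_cancel₀ (hepos i).ne'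
            rw [h1, Matrix.diagonal_one, Matrix.mul_one, hU1]
    have hnorm : ‖mulVecE (C * Cᵀ + α • (1 : Matrix (Fin N) (Fin N) ℝ))⁻¹ r‖ ^ 2
        = ∑ i, ((e i)⁻¹ * c i) ^ 2 := by
      rw [hAeq, hinv]
      have hv : mulVecE (U * Matrix.diagonal (fun i => (e i)⁻¹) * star U) r
          = (U *ᵥ (fun i => (e i)⁻¹ * c i) : Fin N → ℝ) := by
        show (U * Matrix.diagonal (fun i => (e i)⁻¹) * star U) *ᵥ r = _
        have hstep : (Matrix.diagonal fun i => (e i)⁻¹) *ᵥ (star U *ᵥ r)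
            = fun i => (e i)⁻¹ * c i := by
          funext i
          rw [Matrix.mulVec_diagonal, hcdef]
        rw [← Matrix.mulVec_mulVec, ← Matrix.mulVec_mulVec, hstep]
      rw [normSqEq, hv, sumSqDot, sumSqDot]
      have hUo : Uᵀ * U = 1 := by
        rw [← Matrix.conjTranspose_eq_transpose_of_trivial]
        exact hU2
      exact dotMulVecSelf U hUo _
    have hnonneg1 : 0 ≤ α * ‖mulVecE (C * Cᵀ + α • (1 : Matrix (Fin N) (Fin N) ℝ))⁻¹ r‖ :=
      mul_nonneg hα.le (norm_nonneg _)
    have hnonneg2 : 0 ≤ q * ‖r‖ := mul_nonneg hq0.le (norm_nonneg _)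
    rw [← sq_eq_sq₀ hnonneg1 hnonneg2, mul_pow, mul_pow, hnorm, ← hsumc,
      Finset.mul_sum, Finset.mul_sum]
    constructor
    · intro h
      rw [← h]
      apply Finset.sum_congr rfl
      intro i _
      have := (hepos i).ne'
      simp only [he] at this ⊢
      field_simp
    · intro h
      rw [← h]
      apply Finset.sum_congr rfl
      intro i _
      have := (hepos i).ne'
      simp only [he] at this ⊢
      field_simp
  obtain ⟨α, ⟨hαpos, hαeq⟩, huniq⟩ := auxScalar lam c hlam hcne q hq0 hq1
  exact ⟨α, ⟨hαpos, (key α hαpos).mpr hαeq⟩,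
    fun y hy => huniq y ⟨hy.1, (key y hy.1).mp hy.2⟩⟩
end

section
/- Under the standing assumptions, fix q ∈ (2ρ, 1) and a starting vector z⁰ ∈ ℝ^s, assume C ≠ 0, and let M be a positive integer. Suppose sequences (z^n)_{n=0}^{M}, (r^n)_{n=0}^{M-1}, (α_n)_{n=0}^{M-1} satisfy, for each 0 ≤ n ≤ M−1: r^n = g^δ − K·S_μ(z^n), ‖r^n‖ > τδ, α_n > 0 with α_n‖(CCᵀ + α_n I)⁻¹ r^n‖ = q_n‖r^n‖ where τ_n = ‖r^n‖/δ and q_n = max{q, 2ρ + (1+ρ)/τ_n}, and z^{n+1} = z^n + WCᵀ(CCᵀ + α_n I)⁻¹ r^n. Then ‖x − z⁰‖² ≥ (8ρ²/(1+2ρ))·(min{1 − q, ρ/τ}/‖C‖²)·Σ_{n=0}^{M−1} ‖r^n‖². -/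
open Matrix Filter RealInnerProductSpace

variable {m n k : ℕ}

lemma inner_mulVecE (A : Matrix (Fin m) (Fin n) ℝ) (v : EuclideanSpace ℝ (Fin n))
    (w : EuclideanSpace ℝ (Fin m)) : ⟪mulVecE A v, w⟫ = ⟪v, mulVecE Aᵀ w⟫ := by
  simp only [PiLp.inner_apply, RCLike.inner_apply, conj_trivial, mulVecE, PiLp.toLp_apply]
  have h1 : ∑ i, w i * A.mulVec v i = w ⬝ᵥ A.mulVec v := rfl
  have h2 : ∑ i, Aᵀ.mulVec w i * v i = Aᵀ.mulVec w ⬝ᵥ v := rfl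
  rw [h1, h2, Matrix.dotProduct_mulVec, ← Matrix.vecMul_transpose, Matrix.transpose_transpose]

lemma norm_mulVecE_le (A : Matrix (Fin m) (Fin n) ℝ) (v : EuclideanSpace ℝ (Fin n)) :
    ‖mulVecE A v‖ ≤ specNorm A * ‖v‖ := by
  have := (Matrix.toEuclideanLin A).toContinuousLinearMap.le_opNorm v
  simpa [specNorm, Matrix.toEuclideanLin_apply, mulVecE] using this

lemma mulVecE_mulVecE (A : Matrix (Fin m) (Fin n) ℝ) (B : Matrix (Fin n) (Fin k) ℝ)
    (v : EuclideanSpace ℝ (Fin k)) : mulVecE (A * B) v = mulVecE A (mulVecE B v) := by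
  simp [mulVecE, Matrix.mulVec_mulVec]

lemma mulVecE_one (v : EuclideanSpace ℝ (Fin n)) : mulVecE 1 v = v := by
  ext i; simp [mulVecE]

lemma mulVecE_add_mat (A B : Matrix (Fin m) (Fin n) ℝ) (v : EuclideanSpace ℝ (Fin n)) :
    mulVecE (A + B) v = mulVecE A v + mulVecE B v := by
  ext i; simp [mulVecE, Matrix.add_mulVec]

lemma mulVecE_sub_mat (A B : Matrix (Fin m) (Fin n) ℝ) (v : EuclideanSpace ℝ (Fin n)) :
    mulVecE (A - B) v = mulVecE A v - mulVecE B v := by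
  ext i; simp [mulVecE, Matrix.sub_mulVec]

lemma mulVecE_add_vec (A : Matrix (Fin m) (Fin n) ℝ) (u v : EuclideanSpace ℝ (Fin n)) :
    mulVecE A (u + v) = mulVecE A u + mulVecE A v := by
  ext i; simp [mulVecE, Matrix.mulVec, dotProduct, PiLp.add_apply, mul_add, Finset.sum_add_distrib]

lemma mulVecE_sub_vec (A : Matrix (Fin m) (Fin n) ℝ) (u v : EuclideanSpace ℝ (Fin n)) :
    mulVecE A (u - v) = mulVecE A u - mulVecE A v := by
  ext i; simp [mulVecE, Matrix.mulVec, dotProduct, PiLp.sub_apply, mul_sub, Finset.sum_sub_distrib]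

lemma mulVecE_smul_one (α : ℝ) (v : EuclideanSpace ℝ (Fin n)) :
    mulVecE (α • (1 : Matrix (Fin n) (Fin n) ℝ)) v = α • v := by
  ext i; simp [mulVecE, Matrix.smul_mulVec]

lemma norm_mulVecE_W {s N : ℕ} (W : Matrix (Fin s) (Fin N) ℝ)
    (hW : Wᵀ * W = (1 : Matrix (Fin N) (Fin N) ℝ)) (v : EuclideanSpace ℝ (Fin N)) :
    ‖mulVecE W v‖ = ‖v‖ := by
  have h : ⟪mulVecE W v, mulVecE W v⟫ = ⟪v, v⟫ := by
    rw [inner_mulVecE, ← mulVecE_mulVecE, hW, mulVecE_one]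
  rw [real_inner_self_eq_norm_sq, real_inner_self_eq_norm_sq] at h
  nlinarith [norm_nonneg (mulVecE W v), norm_nonneg v]

lemma posdef_reg {N : ℕ} (C : Matrix (Fin N) (Fin N) ℝ) {α : ℝ} (hα : 0 < α) :
    (C * Cᵀ + α • (1 : Matrix (Fin N) (Fin N) ℝ)).PosDef := by
  have h1 : (C * Cᵀ).PosSemidef := by
    have := Matrix.posSemidef_self_mul_conjTranspose C
    simpa using this
  have h2 : (α • (1 : Matrix (Fin N) (Fin N) ℝ)).PosDef := by
    rw [Matrix.smul_one_eq_diagonal]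
    exact Matrix.posDef_diagonal_iff.2 (fun _ => hα)
  exact Matrix.PosDef.posSemidef_add h1 h2

lemma specNorm_pos {N : ℕ} (C : Matrix (Fin N) (Fin N) ℝ) (hC : C ≠ 0) : 0 < specNorm C := by
  rw [specNorm, norm_pos_iff]
  intro h
  apply hC
  have h2 : Matrix.toEuclideanLin C = 0 := LinearMap.toContinuousLinearMap.map_eq_zero_iff.mp h
  simpa using congrArg (Matrix.toEuclideanLin (𝕜 := ℝ) (m := Fin N) (n := Fin N)).symm h2

lemma norm_transpose_mulVecE_le {N : ℕ} (C : Matrix (Fin N) (Fin N) ℝ)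
    (h : EuclideanSpace ℝ (Fin N)) : ‖mulVecE Cᵀ h‖ ≤ specNorm C * ‖h‖ := by
  have hs : 0 ≤ specNorm C := by unfold specNorm; exact norm_nonneg _
  rcases eq_or_lt_of_le (norm_nonneg (mulVecE Cᵀ h)) with h0 | h0
  · rw [← h0]; exact mul_nonneg hs (norm_nonneg _)
  · have key : ‖mulVecE Cᵀ h‖ ^ 2 ≤ specNorm C * ‖mulVecE Cᵀ h‖ * ‖h‖ := by
      have e1 : ‖mulVecE Cᵀ h‖ ^ 2 = ⟪mulVecE C (mulVecE Cᵀ h), h⟫ := by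
        rw [inner_mulVecE, real_inner_self_eq_norm_sq]
      have e2 := real_inner_le_norm (mulVecE C (mulVecE Cᵀ h)) h
      have e3 := norm_mulVecE_le C (mulVecE Cᵀ h)
      nlinarith [norm_nonneg h]
    nlinarith

set_option maxHeartbeats 4000000 in
lemma key_step {N s : ℕ}
    (A C : Matrix (Fin N) (Fin N) ℝ) (hC : C ≠ 0) (W : Matrix (Fin s) (Fin N) ℝ)
    (hW : Wᵀ * W = (1 : Matrix (Fin N) (Fin N) ℝ))
    (ρ μ δ : ℝ) (hρ0 : 0 < ρ) (hρ1 : ρ < 1 / 2) (hδ : 0 < δ)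
    (hi : ∀ v : EuclideanSpace ℝ (Fin N), ‖mulVecE (C - A) v‖ ≤ ρ * ‖mulVecE A v‖)
    (hii : ∀ u : EuclideanSpace ℝ (Fin s), ‖mulVecE (C * Wᵀ) (u - soft μ u)‖ ≤ ρ * δ)
    (x : EuclideanSpace ℝ (Fin s)) (gδ : EuclideanSpace ℝ (Fin N))
    (hgδ : ‖gδ - mulVecE (A * Wᵀ) x‖ ≤ δ)
    (q : ℝ) (hq0 : 2 * ρ < q) (hq1 : q < 1)
    (zn : EuclideanSpace ℝ (Fin s)) (rn : EuclideanSpace ℝ (Fin N)) (α : ℝ)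
    (hr : rn = gδ - mulVecE (A * Wᵀ) (soft μ zn))
    (hb : ‖rn‖ > ((1 + 2 * ρ) / (1 - 2 * ρ)) * δ)
    (hα : 0 < α)
    (heq : α * ‖mulVecE (C * Cᵀ + α • (1 : Matrix (Fin N) (Fin N) ℝ))⁻¹ rn‖ =
      max q (2 * ρ + (1 + ρ) / (‖rn‖ / δ)) * ‖rn‖) :
    (8 * ρ ^ 2 / (1 + 2 * ρ)) *
        (min (1 - q) (ρ / ((1 + 2 * ρ) / (1 - 2 * ρ))) / specNorm C ^ 2) * ‖rn‖ ^ 2 ≤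
      ‖x - zn‖ ^ 2 -
        ‖x - (zn + mulVecE (W * Cᵀ * (C * Cᵀ + α • (1 : Matrix (Fin N) (Fin N) ℝ))⁻¹) rn)‖ ^ 2 := by
  have h2ρ : (0:ℝ) < 1 - 2 * ρ := by linarith
  have h12ρ : (0:ℝ) < 1 + 2 * ρ := by linarith
  set τ : ℝ := (1 + 2 * ρ) / (1 - 2 * ρ) with hτdef
  have hτpos : 0 < τ := div_pos h12ρ h2ρ
  have hrpos : 0 < ‖rn‖ := lt_trans (by positivity) hb
  set P : Matrix (Fin N) (Fin N) ℝ := C * Cᵀ + α • 1 with hPdef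
  have hPdet : P.det ≠ 0 := (posdef_reg C hα).det_pos.ne'
  set h : EuclideanSpace ℝ (Fin N) := mulVecE P⁻¹ rn with hhdef
  set d : EuclideanSpace ℝ (Fin N) := mulVecE Cᵀ h with hddef
  have hPh : mulVecE P h = rn := by
    rw [hhdef, ← mulVecE_mulVecE, Matrix.mul_nonsing_inv _ (isUnit_iff_ne_zero.mpr hPdet), mulVecE_one]
  have hBh : mulVecE (C * Cᵀ) h + α • h = rn := by
    rw [← mulVecE_smul_one α h, ← mulVecE_add_mat]; exact hPh
  set qn : ℝ := max q (2 * ρ + (1 + ρ) / (‖rn‖ / δ)) with hqndef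
  -- the error term
  set e : EuclideanSpace ℝ (Fin N) :=
    (gδ - mulVecE (A * Wᵀ) x) + mulVecE ((A - C) * Wᵀ) (x - soft μ zn)
      + mulVecE (C * Wᵀ) (zn - soft μ zn) with hedef
  have hsubm : (A - C) * Wᵀ = A * Wᵀ - C * Wᵀ := Matrix.sub_mul _ _ _
  have hre : rn = e + mulVecE (C * Wᵀ) (x - zn) := by
    rw [hedef, hr, hsubm, mulVecE_sub_mat, mulVecE_sub_vec, mulVecE_sub_vec, mulVecE_sub_vec,
      mulVecE_sub_vec]
    abel
  -- bound on ‖e‖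
  have hAWx : mulVecE (A * Wᵀ) (x - soft μ zn) = rn - (gδ - mulVecE (A * Wᵀ) x) := by
    rw [hr, mulVecE_sub_vec]; abel
  have ht2 : ‖mulVecE ((A - C) * Wᵀ) (x - soft μ zn)‖ ≤ ρ * (‖rn‖ + δ) := by
    have e1 : mulVecE ((A - C) * Wᵀ) (x - soft μ zn) =
        mulVecE (A - C) (mulVecE Wᵀ (x - soft μ zn)) := mulVecE_mulVecE _ _ _
    have e2 : mulVecE (A - C) (mulVecE Wᵀ (x - soft μ zn)) =
        - mulVecE (C - A) (mulVecE Wᵀ (x - soft μ zn)) := by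
      rw [mulVecE_sub_mat, mulVecE_sub_mat]; abel
    have e3 := hi (mulVecE Wᵀ (x - soft μ zn))
    have e4 : mulVecE A (mulVecE Wᵀ (x - soft μ zn)) = mulVecE (A * Wᵀ) (x - soft μ zn) :=
      (mulVecE_mulVecE _ _ _).symm
    have e5 : ‖mulVecE (A * Wᵀ) (x - soft μ zn)‖ ≤ ‖rn‖ + δ := by
      rw [hAWx]
      calc ‖rn - (gδ - mulVecE (A * Wᵀ) x)‖ ≤ ‖rn‖ + ‖gδ - mulVecE (A * Wᵀ) x‖ := norm_sub_le _ _
        _ ≤ ‖rn‖ + δ := by linarith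
    rw [e1, e2, norm_neg]
    calc ‖mulVecE (C - A) (mulVecE Wᵀ (x - soft μ zn))‖
        ≤ ρ * ‖mulVecE A (mulVecE Wᵀ (x - soft μ zn))‖ := e3
      _ ≤ ρ * (‖rn‖ + δ) := by rw [e4]; exact mul_le_mul_of_nonneg_left e5 hρ0.le
  have he_bound : ‖e‖ ≤ ρ * ‖rn‖ + (1 + 2 * ρ) * δ := by
    have := norm_add₃_le (a := gδ - mulVecE (A * Wᵀ) x)
      (b := mulVecE ((A - C) * Wᵀ) (x - soft μ zn)) (c := mulVecE (C * Wᵀ) (zn - soft μ zn))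
    have h3 := hii zn
    rw [← hedef] at this
    linarith
  -- inner product identities
  have hinner_r : ⟪rn, h⟫ = ‖d‖ ^ 2 + α * ‖h‖ ^ 2 := by
    rw [← hBh, inner_add_left, real_inner_smul_left, real_inner_self_eq_norm_sq]
    congr 1
    rw [mulVecE_mulVecE, inner_mulVecE, ← hddef, real_inner_self_eq_norm_sq]
  -- geometry of the step
  set u : EuclideanSpace ℝ (Fin s) := x - zn with hudef
  have hz' : x - (zn + mulVecE (W * Cᵀ * P⁻¹) rn) = u - mulVecE W d := by
    rw [hudef, hddef, hhdef, mulVecE_mulVecE, mulVecE_mulVecE]; abel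
  have hWd : ‖mulVecE W d‖ = ‖d‖ := norm_mulVecE_W W hW d
  have hCWu : mulVecE (C * Wᵀ) u = rn - e := by rw [hre]; abel
  have hinner_u : ⟪u, mulVecE W d⟫ = ⟪rn, h⟫ - ⟪e, h⟫ := by
    calc ⟪u, mulVecE W d⟫ = ⟪mulVecE W d, u⟫ := real_inner_comm _ _
      _ = ⟪d, mulVecE Wᵀ u⟫ := inner_mulVecE W d u
      _ = ⟪h, mulVecE C (mulVecE Wᵀ u)⟫ := by
          rw [hddef, inner_mulVecE Cᵀ h (mulVecE Wᵀ u), Matrix.transpose_transpose]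
      _ = ⟪h, rn - e⟫ := by rw [← mulVecE_mulVecE, hCWu]
      _ = ⟪rn, h⟫ - ⟪e, h⟫ := by
          rw [inner_sub_right, real_inner_comm h rn, real_inner_comm h e]
  have hΔ : ‖u‖ ^ 2 - ‖x - (zn + mulVecE (W * Cᵀ * P⁻¹) rn)‖ ^ 2 =
      ‖d‖ ^ 2 + 2 * (α * ‖h‖ ^ 2) - 2 * ⟪e, h⟫ := by
    have hexp : ‖u - mulVecE W d‖ ^ 2 =
        ‖u‖ ^ 2 - 2 * ⟪u, mulVecE W d⟫ + ‖mulVecE W d‖ ^ 2 := by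
      exact norm_sub_sq_real u (mulVecE W d)
    rw [hz', hexp, hinner_u, hinner_r, hWd]
    ring
  clear_value e d h u qn
  clear_value P
  clear_value τ
  -- scalar estimates
  have hq_ge : 2 * ρ * ‖rn‖ + (1 + ρ) * δ ≤ qn * ‖rn‖ := by
    have h1 : 2 * ρ + (1 + ρ) / (‖rn‖ / δ) ≤ qn := by
      rw [hqndef]; exact le_max_right _ _
    have h2 : (1 + ρ) / (‖rn‖ / δ) = (1 + ρ) * δ / ‖rn‖ := by
      rw [div_div_eq_mul_div]
    have h3 : (2 * ρ + (1 + ρ) * δ / ‖rn‖) * ‖rn‖ = 2 * ρ * ‖rn‖ + (1 + ρ) * δ := by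
      field_simp
    have h4 := mul_le_mul_of_nonneg_right h1 hrpos.le
    rw [h2, h3] at h4
    linarith
  have hαh : α * ‖h‖ = qn * ‖rn‖ := heq
  -- lower bound on ‖h‖
  set sN : ℝ := specNorm C with hsNdef
  have hsN : 0 < sN := specNorm_pos C hC
  set cmin : ℝ := min (1 - q) (ρ / τ) with hcmindef
  have hcmin_pos : 0 < cmin := lt_min (by linarith) (div_pos hρ0 hτpos)
  clear_value sN cmin
  have hqn_le : qn ≤ 1 - cmin := by
    rw [hqndef]
    apply max_le
    · have : cmin ≤ 1 - q := by rw [hcmindef]; exact min_le_left _ _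
      linarith
    · have h2 : (1 + ρ) / (‖rn‖ / δ) = (1 + ρ) * δ / ‖rn‖ := by rw [div_div_eq_mul_div]
      have h4 : (1 + ρ) * δ / ‖rn‖ ≤ (1 + ρ) / τ := by
        rw [div_le_div_iff₀ hrpos hτpos]
        nlinarith [hb]
      have h5 : 2 * ρ + (1 + ρ) / τ = 1 - ρ / τ := by
        rw [hτdef]
        field_simp
        ring
      have h6 : cmin ≤ ρ / τ := by rw [hcmindef]; exact min_le_right _ _
      rw [h2]
      linarith
  have hBh_norm : ‖mulVecE (C * Cᵀ) h‖ ≤ sN ^ 2 * ‖h‖ := by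
    rw [mulVecE_mulVecE]
    calc ‖mulVecE C (mulVecE Cᵀ h)‖ ≤ sN * ‖mulVecE Cᵀ h‖ := hsNdef ▸ norm_mulVecE_le C _
      _ ≤ sN * (sN * ‖h‖) :=
        mul_le_mul_of_nonneg_left (hsNdef ▸ norm_transpose_mulVecE_le C h) hsN.le
      _ = sN ^ 2 * ‖h‖ := by ring
  have hh_low : cmin * ‖rn‖ ≤ sN ^ 2 * ‖h‖ := by
    have h1 : ‖rn‖ ≤ ‖mulVecE (C * Cᵀ) h‖ + α * ‖h‖ := by
      calc ‖rn‖ = ‖mulVecE (C * Cᵀ) h + α • h‖ := by rw [hBh]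
        _ ≤ ‖mulVecE (C * Cᵀ) h‖ + ‖α • h‖ := norm_add_le _ _
        _ = ‖mulVecE (C * Cᵀ) h‖ + α * ‖h‖ := by rw [norm_smul, Real.norm_of_nonneg hα.le]
    have h2 : (1 - qn) * ‖rn‖ ≤ sN ^ 2 * ‖h‖ := by
      have : (1 - qn) * ‖rn‖ = ‖rn‖ - qn * ‖rn‖ := by ring
      linarith
    have h3 : cmin * ‖rn‖ ≤ (1 - qn) * ‖rn‖ :=
      mul_le_mul_of_nonneg_right (by linarith) hrpos.le
    linarith
  -- residual gap
  have hgap : (4 * ρ / (1 + 2 * ρ)) * ‖rn‖ ≤ ‖rn‖ - δ := by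
    have h1 : τ * δ < ‖rn‖ := by rw [hτdef] at hb ⊢; linarith [hb]
    have h2 : δ < ‖rn‖ / τ := by rw [lt_div_iff₀ hτpos]; linarith [h1]
    have h3 : ‖rn‖ - ‖rn‖ / τ = (4 * ρ / (1 + 2 * ρ)) * ‖rn‖ := by
      rw [hτdef]
      field_simp
      ring
    linarith
  -- main chain
  have hτ1 : 1 ≤ τ := by rw [hτdef, le_div_iff₀ h2ρ]; linarith
  have hδr : δ < ‖rn‖ := by nlinarith
  have hfac : ρ * (‖rn‖ - δ) ≤ qn * ‖rn‖ - ‖e‖ := by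
    have expand : ρ * (‖rn‖ - δ) = ρ * ‖rn‖ - ρ * δ := by ring
    linarith
  have hfac0 : 0 ≤ ρ * (‖rn‖ - δ) := mul_nonneg hρ0.le (by linarith)
  have hΔ_ge : 2 * ‖h‖ * (ρ * (‖rn‖ - δ)) ≤
      ‖d‖ ^ 2 + 2 * (α * ‖h‖ ^ 2) - 2 * ⟪e, h⟫ := by
    have hie := real_inner_le_norm e h
    have hαh2 : α * ‖h‖ ^ 2 = (qn * ‖rn‖) * ‖h‖ := by rw [← hαh]; ring
    have h1 : 2 * ‖h‖ * (ρ * (‖rn‖ - δ)) ≤ 2 * ‖h‖ * (qn * ‖rn‖ - ‖e‖) :=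
      mul_le_mul_of_nonneg_left hfac (by have := norm_nonneg h; linarith)
    have h3 : ⟪e, h⟫ ≤ ‖e‖ * ‖h‖ := hie
    rw [hαh2]
    nlinarith [sq_nonneg ‖d‖]
  have hh_low' : cmin * ‖rn‖ / sN ^ 2 ≤ ‖h‖ := by
    rw [div_le_iff₀ (pow_pos hsN 2)]
    linarith [hh_low]
  have hfinal : (8 * ρ ^ 2 / (1 + 2 * ρ)) * (cmin / sN ^ 2) * ‖rn‖ ^ 2 ≤
      2 * ‖h‖ * (ρ * (‖rn‖ - δ)) := by
    have key : 2 * (cmin * ‖rn‖ / sN ^ 2) * (ρ * ((4 * ρ / (1 + 2 * ρ)) * ‖rn‖)) ≤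
        2 * ‖h‖ * (ρ * (‖rn‖ - δ)) := by
      have a1 : 0 ≤ cmin * ‖rn‖ / sN ^ 2 :=
        div_nonneg (mul_nonneg hcmin_pos.le hrpos.le) (pow_pos hsN 2).le
      have a2 : 0 ≤ ρ * ((4 * ρ / (1 + 2 * ρ)) * ‖rn‖) :=
        mul_nonneg hρ0.le (mul_nonneg (div_nonneg (by linarith) h12ρ.le) hrpos.le)
      have b1 : ρ * ((4 * ρ / (1 + 2 * ρ)) * ‖rn‖) ≤ ρ * (‖rn‖ - δ) :=
        mul_le_mul_of_nonneg_left hgap hρ0.le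
      nlinarith [mul_le_mul hh_low' b1 a2 (norm_nonneg h)]
    calc (8 * ρ ^ 2 / (1 + 2 * ρ)) * (cmin / sN ^ 2) * ‖rn‖ ^ 2
        = 2 * (cmin * ‖rn‖ / sN ^ 2) * (ρ * ((4 * ρ / (1 + 2 * ρ)) * ‖rn‖)) := by
          field_simp; ring
      _ ≤ 2 * ‖h‖ * (ρ * (‖rn‖ - δ)) := key
  linarith [hΔ, hΔ_ge, hfinal]


/-- Corollary 1 of the paper (second inequality): the sum of squared residual norms
is controlled by `‖x − z⁰‖²`, with explicit constant
`(8ρ²/(1+2ρ))·(min{1 − q, ρ/τ}/‖C‖²)`. -/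
theorem stmt13 {N s : ℕ} (hN : 0 < N) (hs : 0 < s) (hNs : N ≤ s)
    (A C : Matrix (Fin N) (Fin N) ℝ) (hC : C ≠ 0) (W : Matrix (Fin s) (Fin N) ℝ)
    (hW : Wᵀ * W = (1 : Matrix (Fin N) (Fin N) ℝ))
    (ρ μ δ : ℝ) (hρ0 : 0 < ρ) (hρ1 : ρ < 1 / 2) (hμ : 0 ≤ μ) (hδ : 0 < δ)
    (hi : ∀ v : EuclideanSpace ℝ (Fin N), ‖mulVecE (C - A) v‖ ≤ ρ * ‖mulVecE A v‖)
    (hii : ∀ u : EuclideanSpace ℝ (Fin s), ‖mulVecE (C * Wᵀ) (u - soft μ u)‖ ≤ ρ * δ)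
    (x : EuclideanSpace ℝ (Fin s)) (gδ : EuclideanSpace ℝ (Fin N))
    (hgδ : ‖gδ - mulVecE (A * Wᵀ) x‖ ≤ δ)
    (q : ℝ) (hq0 : 2 * ρ < q) (hq1 : q < 1)
    (M : ℕ) (hM : 0 < M)
    (z : ℕ → EuclideanSpace ℝ (Fin s)) (r : ℕ → EuclideanSpace ℝ (Fin N)) (αs : ℕ → ℝ)
    (hrdef : ∀ n < M, r n = gδ - mulVecE (A * Wᵀ) (soft μ (z n)))
    (hbig : ∀ n < M, ‖r n‖ > ((1 + 2 * ρ) / (1 - 2 * ρ)) * δ)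
    (hαpos : ∀ n < M, 0 < αs n)
    (hαeq : ∀ n < M,
      αs n * ‖mulVecE (C * Cᵀ + αs n • (1 : Matrix (Fin N) (Fin N) ℝ))⁻¹ (r n)‖ =
        max q (2 * ρ + (1 + ρ) / (‖r n‖ / δ)) * ‖r n‖)
    (hstep : ∀ n < M, z (n + 1) =
      z n + mulVecE (W * Cᵀ * (C * Cᵀ + αs n • (1 : Matrix (Fin N) (Fin N) ℝ))⁻¹) (r n)) :
    ‖x - z 0‖ ^ 2 ≥
      (8 * ρ ^ 2 / (1 + 2 * ρ)) *
        (min (1 - q) (ρ / ((1 + 2 * ρ) / (1 - 2 * ρ))) / specNorm C ^ 2) *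
        ∑ n ∈ Finset.range M, ‖r n‖ ^ 2 := by
  have hkey : ∀ n, n < M →
      (8 * ρ ^ 2 / (1 + 2 * ρ)) *
          (min (1 - q) (ρ / ((1 + 2 * ρ) / (1 - 2 * ρ))) / specNorm C ^ 2) * ‖r n‖ ^ 2 ≤
        ‖x - z n‖ ^ 2 - ‖x - z (n + 1)‖ ^ 2 := by
    intro n hn
    have hks := key_step A C hC W hW ρ μ δ hρ0 hρ1 hδ hi hii x gδ hgδ q hq0 hq1
      (z n) (r n) (αs n) (hrdef n hn) (hbig n hn) (hαpos n hn) (hαeq n hn)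
    rw [hstep n hn]
    exact hks
  have htel : ∀ m, m ≤ M →
      (∑ n ∈ Finset.range m, (8 * ρ ^ 2 / (1 + 2 * ρ)) *
          (min (1 - q) (ρ / ((1 + 2 * ρ) / (1 - 2 * ρ))) / specNorm C ^ 2) * ‖r n‖ ^ 2) ≤
        ‖x - z 0‖ ^ 2 - ‖x - z m‖ ^ 2 := by
    intro m
    induction m with
    | zero => intro _; simp
    | succ k ih =>
      intro hk
      have h1 := ih (Nat.le_of_succ_le hk)
      have h2 := hkey k (by omega)
      rw [Finset.sum_range_succ]
      linarith
  have hM' := htel M le_rfl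
  have hsq : 0 ≤ ‖x - z M‖ ^ 2 := sq_nonneg _
  rw [ge_iff_le, Finset.mul_sum]
  calc ∑ n ∈ Finset.range M, (8 * ρ ^ 2 / (1 + 2 * ρ)) *
        (min (1 - q) (ρ / ((1 + 2 * ρ) / (1 - 2 * ρ))) / specNorm C ^ 2) * ‖r n‖ ^ 2
      ≤ ‖x - z 0‖ ^ 2 - ‖x - z M‖ ^ 2 := hM'
    _ ≤ ‖x - z 0‖ ^ 2 := by linarith
end
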